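/- arXiv:2302.07019 — 11 statements merged into one kernel-verified Lean document; each statement's English description precedes it below -/
import Mathlib

section
/- Let p ≥ 1 be a natural number, c a nonzero real number, and f : ℝ → ℝ continuous on [0,1] and continuously differentiable on (0,1], with f(x) = c·x^p + o(x^p) and f′(x) = c·p·x^(p−1) + o(x^(p−1)) as x → 0⁺. Then ε² · (∫₀^ε f′(x)² dx) / (∫₀^ε f(x)² dx) → p²·(2p+1)/(2p−1) as ε → 0⁺. Consequently the generalized Rayleigh quotient of the second-order stiffness against the consistent mass of the cut part diverges like ε^(−2) as the cut size ε tends to zero. -/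
open MeasureTheory Filter Set Topology


lemma lemA (g : ℝ → ℝ) (q : ℕ) (L : ℝ)
    (hint : ∀ᶠ ε in 𝓝[>] (0:ℝ), IntervalIntegrable g volume 0 ε)
    (h : Tendsto (fun x => g x / x ^ q) (𝓝[>] (0:ℝ)) (𝓝 L)) :
    Tendsto (fun ε => (∫ x in (0:ℝ)..ε, g x) / ε ^ (q+1)) (𝓝[>] (0:ℝ))
      (𝓝 (L / (q+1))) := by
  rw [Metric.tendsto_nhds]
  intro δ hδ
  have hh : ∀ᶠ x in 𝓝[>] (0:ℝ), |g x / x ^ q - L| < δ/2 := by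
    have := Metric.tendsto_nhds.mp h (δ/2) (by positivity)
    simpa [Real.dist_eq] using this
  obtain ⟨a, ha, haP⟩ := (nhdsGT_basis (0:ℝ)).eventually_iff.mp hh
  filter_upwards [hint, Ioo_mem_nhdsGT_of_mem (by constructor <;> simp [ha] : (0:ℝ) ∈ Ico 0 a),
    self_mem_nhdsWithin] with ε hεint hεa (hεpos : 0 < ε)
  have hεa' : ε < a := hεa.2
  -- integrability pieces
  have hpow : IntervalIntegrable (fun x => L * x ^ q) volume 0 ε :=
    (continuous_const.mul (continuous_pow q)).intervalIntegrable 0 ε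
  have hsub : IntervalIntegrable (fun x => g x - L * x ^ q) volume 0 ε := hεint.sub hpow
  have key : |(∫ x in (0:ℝ)..ε, g x) - L * ε ^ (q+1) / (q+1)| ≤ (δ/2) * ε ^ (q+1) / (q+1) := by
    have h1 : (∫ x in (0:ℝ)..ε, L * x ^ q) = L * ε ^ (q+1) / (q+1) := by
      rw [intervalIntegral.integral_const_mul, integral_pow]
      ring
    have h2 : (∫ x in (0:ℝ)..ε, g x) - L * ε ^ (q+1) / (q+1)
        = ∫ x in (0:ℝ)..ε, (g x - L * x ^ q) := by
      rw [intervalIntegral.integral_sub hεint hpow, h1]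
    rw [h2]
    calc |∫ x in (0:ℝ)..ε, (g x - L * x ^ q)|
        ≤ ∫ x in (0:ℝ)..ε, |g x - L * x ^ q| :=
          intervalIntegral.abs_integral_le_integral_abs hεpos.le
      _ ≤ ∫ x in (0:ℝ)..ε, (δ/2) * x ^ q := by
          rw [intervalIntegral.integral_of_le hεpos.le, intervalIntegral.integral_of_le hεpos.le]
          apply setIntegral_mono_on hsub.abs.1
            ((continuous_const.mul (continuous_pow q)).intervalIntegrable 0 ε).1
            measurableSet_Ioc
          intro x hx
          have hx0 : 0 < x := hx.1
          have hxa : x ∈ Ioo 0 a := ⟨hx0, lt_of_le_of_lt hx.2 hεa'⟩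
          have hxq : (0:ℝ) < x ^ q := pow_pos hx0 q
          have : g x - L * x ^ q = (g x / x ^ q - L) * x ^ q := by
            field_simp
          rw [this, abs_mul, abs_of_pos hxq]
          exact mul_le_mul_of_nonneg_right (le_of_lt (haP hxa)) hxq.le
      _ = (δ/2) * ε ^ (q+1) / (q+1) := by
          rw [intervalIntegral.integral_of_le hεpos.le] at *
          rw [← intervalIntegral.integral_of_le hεpos.le,
            intervalIntegral.integral_const_mul, integral_pow]
          ring
  have hεq : (0:ℝ) < ε ^ (q+1) := pow_pos hεpos _
  have hq1 : (0:ℝ) < (q:ℝ) + 1 := by positivity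
  rw [Real.dist_eq]
  have heq : (∫ x in (0:ℝ)..ε, g x) / ε ^ (q+1) - L / ((q:ℝ)+1)
      = ((∫ x in (0:ℝ)..ε, g x) - L * ε ^ (q+1) / ((q:ℝ)+1)) / ε ^ (q+1) := by
    field_simp
  have hle : (δ/2) * ε ^ (q+1) / ((q:ℝ)+1) ≤ (δ/2) * ε ^ (q+1) := by
    rw [div_le_iff₀ hq1]
    nlinarith [mul_nonneg (mul_nonneg (half_pos hδ).le hεq.le) (Nat.cast_nonneg q : (0:ℝ) ≤ q)]
  push_cast
  rw [heq, abs_div, abs_of_pos hεq, div_lt_iff₀ hεq]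
  calc |(∫ x in (0:ℝ)..ε, g x) - L * ε ^ (q+1) / ((q:ℝ)+1)|
      ≤ (δ/2) * ε ^ (q+1) / ((q:ℝ)+1) := key
    _ ≤ (δ/2) * ε ^ (q+1) := hle
    _ < δ * ε ^ (q+1) := by nlinarith

/-- With `f x = c·x^p + o(x^p)` and `f′ x = c·p·x^(p−1) + o(x^(p−1))`
as `x → 0⁺` (`p ≥ 1`, `c ≠ 0`), the Rayleigh quotient of second-order stiffness
against consistent mass satisfies
`ε² · (∫₀^ε f′² dx)/(∫₀^ε f² dx) → p²·(2p+1)/(2p−1)` as `ε → 0⁺`. -/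
theorem rayleigh_second_order_consistent_mass
    (p : ℕ) (hp : 1 ≤ p) (c : ℝ) (hc : c ≠ 0) (f : ℝ → ℝ)
    (hf : ContinuousOn f (Icc 0 1))
    (hdf : DifferentiableOn ℝ f (Ioc 0 1))
    (hdf' : ContinuousOn (deriv f) (Ioc 0 1))
    (hasymp : Tendsto (fun x => (f x - c * x ^ p) / x ^ p) (𝓝[>] (0:ℝ)) (𝓝 0))
    (hasymp' : Tendsto
      (fun x => (deriv f x - c * (p : ℝ) * x ^ (p - 1)) / x ^ (p - 1))
      (𝓝[>] (0:ℝ)) (𝓝 0)) :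
    Tendsto (fun ε =>
        ε ^ 2 * (∫ x in (0:ℝ)..ε, (deriv f x) ^ 2) / (∫ x in (0:ℝ)..ε, (f x) ^ 2))
      (𝓝[>] (0:ℝ))
      (𝓝 ((p : ℝ) ^ 2 * (2 * (p : ℝ) + 1) / (2 * (p : ℝ) - 1))) := by
  -- f x / x^p → c
  have hfq : Tendsto (fun x => f x / x ^ p) (𝓝[>] (0:ℝ)) (𝓝 c) := by
    have h1 := hasymp.add (tendsto_const_nhds (x := c))
    rw [zero_add] at h1
    refine h1.congr' ?_
    filter_upwards [self_mem_nhdsWithin] with x (hx : 0 < x)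
    have : x ^ p ≠ 0 := pow_ne_zero _ hx.ne'
    field_simp
    ring
  -- deriv f x / x^(p-1) → c*p
  have hfq' : Tendsto (fun x => deriv f x / x ^ (p-1)) (𝓝[>] (0:ℝ)) (𝓝 (c * p)) := by
    have h1 := hasymp'.add (tendsto_const_nhds (x := c * (p:ℝ)))
    rw [zero_add] at h1
    refine h1.congr' ?_
    filter_upwards [self_mem_nhdsWithin] with x (hx : 0 < x)
    have : x ^ (p-1) ≠ 0 := pow_ne_zero _ hx.ne'
    field_simp
    ring
  -- denominator asymptotics
  have hD : Tendsto (fun ε => (∫ x in (0:ℝ)..ε, (f x)^2) / ε ^ (2*p+1)) (𝓝[>] (0:ℝ))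
      (𝓝 (c^2 / (((2*p:ℕ):ℝ) + 1))) := by
    apply lemA
    · filter_upwards [Ioc_mem_nhdsGT_of_mem (by simp [zero_lt_one] : (0:ℝ) ∈ Ico 0 1)]
        with ε hε
      apply ContinuousOn.intervalIntegrable
      have : uIcc (0:ℝ) ε = Icc 0 ε := uIcc_of_le hε.1.le
      rw [this]
      exact ((hf.mono (Icc_subset_Icc le_rfl hε.2)).pow 2)
    · have := hfq.pow 2
      refine this.congr fun x => ?_
      rw [div_pow, ← pow_mul, mul_comm p 2]
  -- numerator asymptotics
  have hN : Tendsto (fun ε => (∫ x in (0:ℝ)..ε, (deriv f x)^2) / ε ^ (2*(p-1)+1))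
      (𝓝[>] (0:ℝ)) (𝓝 ((c*(p:ℝ))^2 / (((2*(p-1):ℕ):ℝ) + 1))) := by
    apply lemA
    · -- eventual integrability of (deriv f)^2
      have hb : ∀ᶠ x in 𝓝[>] (0:ℝ), |deriv f x / x ^ (p-1) - c * p| < 1 := by
        have := Metric.tendsto_nhds.mp hfq' 1 one_pos
        simpa [Real.dist_eq] using this
      obtain ⟨a, ha, haP⟩ := (nhdsGT_basis (0:ℝ)).eventually_iff.mp hb
      set b := min a 1 with hb_def
      have hb0 : 0 < b := lt_min ha one_pos
      set M : ℝ := (|c * p| + 1)^2 with hM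
      have hbound : ∀ x ∈ Ioo (0:ℝ) b, |deriv f x| ≤ |c * p| + 1 := by
        intro x hx
        have hx0 : 0 < x := hx.1
        have hxa : x ∈ Ioo 0 a := ⟨hx0, lt_of_lt_of_le hx.2 (min_le_left a 1)⟩
        have h1 : |deriv f x / x ^ (p-1)| < |c * p| + 1 := by
          have := haP hxa
          have := abs_sub_abs_le_abs_sub (deriv f x / x ^ (p-1)) (c * (p:ℝ))
          linarith [abs_abs_sub_abs_le_abs_sub (deriv f x / x ^ (p-1)) (c * (p:ℝ))]
        have hxp : (0:ℝ) < x ^ (p-1) := pow_pos hx0 _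
        have hxple : x ^ (p-1) ≤ 1 :=
          pow_le_one₀ hx0.le (le_of_lt (lt_of_lt_of_le hx.2 (min_le_right a 1)))
        have : |deriv f x| = |deriv f x / x ^ (p-1)| * x ^ (p-1) := by
          rw [abs_div, abs_of_pos hxp, div_mul_cancel₀]
          exact hxp.ne'
        rw [this]
        calc |deriv f x / x ^ (p-1)| * x ^ (p-1)
            ≤ (|c * p| + 1) * 1 := by
              apply mul_le_mul h1.le hxple hxp.le (by positivity)
          _ = |c * p| + 1 := mul_one _
      filter_upwards [Ioo_mem_nhdsGT_of_mem (by simp [hb0] : (0:ℝ) ∈ Ico 0 b)]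
        with ε hε
      rw [intervalIntegrable_iff_integrableOn_Ioc_of_le hε.1.le]
      apply Integrable.mono' (integrable_const M)
      · exact (((measurable_deriv f).pow_const 2).aestronglyMeasurable).restrict
      · rw [ae_restrict_iff' measurableSet_Ioc]
        refine ae_of_all _ fun x hx => ?_
        have hxb : x ∈ Ioo (0:ℝ) b := ⟨hx.1, lt_of_le_of_lt hx.2 hε.2⟩
        have := hbound x hxb
        have h2 : (deriv f x)^2 ≤ M := by
          rw [hM, ← sq_abs]
          exact pow_le_pow_left₀ (abs_nonneg _) this 2
        have h3 : (0:ℝ) ≤ (deriv f x)^2 := sq_nonneg _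
        simpa [Real.norm_eq_abs, abs_of_nonneg h3] using h2
    · have := hfq'.pow 2
      refine this.congr fun x => ?_
      rw [div_pow, ← pow_mul, mul_comm (p-1) 2]
  -- combine
  have hc2 : c^2 / ((2*p:ℕ) + 1 : ℝ) ≠ 0 := by
    apply div_ne_zero (pow_ne_zero 2 hc)
    positivity
  have hcomb := hN.div hD hc2
  have hfinal : ((c*(p:ℝ))^2 / ((2*(p-1):ℕ) + 1 : ℝ)) / (c^2 / ((2*p:ℕ) + 1 : ℝ))
      = (p : ℝ) ^ 2 * (2 * (p : ℝ) + 1) / (2 * (p : ℝ) - 1) := by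
    have hcast : ((2*(p-1):ℕ) : ℝ) = 2 * ((p:ℝ) - 1) := by
      push_cast [Nat.cast_sub hp]
      ring
    have hp1 : (1:ℝ) ≤ (p:ℝ) := by exact_mod_cast hp
    rw [hcast]
    have h2p1 : 2 * ((p:ℝ) - 1) + 1 = 2 * (p:ℝ) - 1 := by ring
    rw [h2p1]
    have hne1 : (2 * (p:ℝ) - 1) ≠ 0 := by nlinarith
    have hne2 : ((2*p:ℕ) + 1 : ℝ) ≠ 0 := by positivity
    field_simp
    push_cast
    ring
  rw [hfinal] at hcomb
  refine hcomb.congr' ?_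
  filter_upwards [self_mem_nhdsWithin] with ε (hε : 0 < ε)
  simp only [Pi.div_apply]
  have hεne : ε ≠ 0 := hε.ne'
  have hεpow : ε^(2*(p-1)+1) * ε^2 = ε^(2*p+1) := by
    rw [← pow_add]
    congr 1
    omega
  have hratio : ε^(2*(p-1)+1) / ε^(2*p+1) = 1 / ε^2 := by
    rw [div_eq_div_iff (pow_ne_zero _ hεne) (pow_ne_zero _ hεne), one_mul, ← hεpow]
  rw [div_div_div_comm, hratio, div_div_eq_mul_div, div_one]
  ring
end

section
/- Let p ≥ 2 be a natural number, c a nonzero real number, and f : ℝ → ℝ continuous on [0,1] and twice continuously differentiable on (0,1], with f(x) = c·x^p + o(x^p) and f″(x) = c·p·(p−1)·x^(p−2) + o(x^(p−2)) as x → 0⁺. Then ε⁴ · (∫₀^ε f″(x)² dx) / (∫₀^ε f(x)² dx) → p²·(p−1)²·(2p+1)/(2p−3) as ε → 0⁺. Consequently the generalized Rayleigh quotient of the fourth-order stiffness against the consistent mass of the cut part diverges like ε^(−4) as the cut size ε tends to zero. -/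
open MeasureTheory Filter Set Topology

lemma aux_int (q : ℕ) (L : ℝ) (h : ℝ → ℝ) (b : ℝ) (hb : 0 < b)
    (hint : ∀ ε : ℝ, 0 < ε → ε < b → IntegrableOn h (Ioc 0 ε) volume)
    (hlim : Tendsto (fun x => h x / x ^ q) (𝓝[>] (0:ℝ)) (𝓝 L)) :
    Tendsto (fun ε => (∫ x in (0:ℝ)..ε, h x) / ε ^ (q+1)) (𝓝[>] (0:ℝ))
      (𝓝 (L / ((q:ℝ)+1))) := by
  rw [Metric.tendsto_nhdsWithin_nhds] at hlim ⊢
  intro δ hδ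
  obtain ⟨a, ha, hA⟩ := hlim (δ/2) (by linarith)
  refine ⟨min a b, lt_min ha hb, ?_⟩
  intro ε hε hεd
  have hε0 : (0:ℝ) < ε := hε
  rw [Real.dist_eq, sub_zero, abs_of_pos hε0] at hεd
  have hεa : ε < a := hεd.trans_le (min_le_left _ _)
  have hεb : ε < b := hεd.trans_le (min_le_right _ _)
  have hpt : ∀ x ∈ Ioc (0:ℝ) ε, |h x - L * x ^ q| ≤ δ/2 * x ^ q := by
    intro x hx
    have hx0 : 0 < x := hx.1
    have hxq : 0 < x ^ q := pow_pos hx0 q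
    have h1 := hA (show x ∈ Ioi (0:ℝ) from hx0)
      (by rw [Real.dist_eq, sub_zero, abs_of_pos hx0]; exact lt_of_le_of_lt hx.2 hεa)
    rw [Real.dist_eq] at h1
    have h2 : |(h x - L * x ^ q) / x ^ q| < δ/2 := by
      have e : h x / x ^ q - L = (h x - L * x ^ q) / x ^ q := by
        field_simp
      rwa [e] at h1
    rw [abs_div, abs_of_pos hxq] at h2
    have := (div_lt_iff₀ hxq).mp h2
    linarith
  have hI : IntegrableOn h (Ioc 0 ε) volume := hint ε hε0 hεb
  have hc1 : IntegrableOn (fun x : ℝ => (L - δ/2) * x ^ q) (Ioc 0 ε) volume :=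
    (Continuous.integrableOn_Ioc (continuous_const.mul (continuous_pow q)))
  have hc2 : IntegrableOn (fun x : ℝ => (L + δ/2) * x ^ q) (Ioc 0 ε) volume :=
    (Continuous.integrableOn_Ioc (continuous_const.mul (continuous_pow q)))
  have hle1 : ∫ x in Ioc (0:ℝ) ε, (L - δ/2) * x ^ q ≤ ∫ x in Ioc (0:ℝ) ε, h x := by
    refine setIntegral_mono_on hc1 hI measurableSet_Ioc (fun x hx => ?_)
    have := abs_le.mp (hpt x hx)
    linarith [this.1]
  have hle2 : ∫ x in Ioc (0:ℝ) ε, h x ≤ ∫ x in Ioc (0:ℝ) ε, (L + δ/2) * x ^ q := by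
    refine setIntegral_mono_on hI hc2 measurableSet_Ioc (fun x hx => ?_)
    have := abs_le.mp (hpt x hx)
    linarith [this.2]
  have hpow : ∫ x in Ioc (0:ℝ) ε, x ^ q = ε ^ (q+1) / ((q:ℝ)+1) := by
    rw [← intervalIntegral.integral_of_le hε0.le, integral_pow]
    simp
  have hcm1 : ∫ x in Ioc (0:ℝ) ε, (L - δ/2) * x ^ q
      = (L - δ/2) * (ε ^ (q+1) / ((q:ℝ)+1)) := by
    rw [MeasureTheory.integral_const_mul, hpow]
  have hcm2 : ∫ x in Ioc (0:ℝ) ε, (L + δ/2) * x ^ q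
      = (L + δ/2) * (ε ^ (q+1) / ((q:ℝ)+1)) := by
    rw [MeasureTheory.integral_const_mul, hpow]
  have hIeq : (∫ x in (0:ℝ)..ε, h x) = ∫ x in Ioc (0:ℝ) ε, h x :=
    intervalIntegral.integral_of_le hε0.le
  have hE : (0:ℝ) < ε ^ (q+1) := pow_pos hε0 _
  have hq1 : (0:ℝ) < (q:ℝ)+1 := by positivity
  rw [Real.dist_eq]
  have up : (∫ x in (0:ℝ)..ε, h x) / ε ^ (q+1) ≤ (L + δ/2) / ((q:ℝ)+1) := by
    rw [div_le_iff₀ hE, hIeq]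
    have e : (L + δ/2) / ((q:ℝ)+1) * ε ^ (q+1) = (L + δ/2) * (ε ^ (q+1) / ((q:ℝ)+1)) := by
      ring
    rw [e, ← hcm2]
    exact hle2
  have lo : (L - δ/2) / ((q:ℝ)+1) ≤ (∫ x in (0:ℝ)..ε, h x) / ε ^ (q+1) := by
    rw [le_div_iff₀ hE, hIeq]
    have e : (L - δ/2) / ((q:ℝ)+1) * ε ^ (q+1) = (L - δ/2) * (ε ^ (q+1) / ((q:ℝ)+1)) := by
      ring
    rw [e, ← hcm1]
    exact hle1
  have hd : (δ/2)/((q:ℝ)+1) ≤ δ/2 :=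
    div_le_self (by linarith) (by linarith [Nat.cast_nonneg (α := ℝ) q])
  have e1 : (L + δ/2)/((q:ℝ)+1) = L/((q:ℝ)+1) + (δ/2)/((q:ℝ)+1) := by ring
  have e2 : (L - δ/2)/((q:ℝ)+1) = L/((q:ℝ)+1) - (δ/2)/((q:ℝ)+1) := by ring
  rw [abs_lt]
  constructor <;> linarith

/-- With `f x = c·x^p + o(x^p)` and `f″ x = c·p·(p−1)·x^(p−2) + o(x^(p−2))`
as `x → 0⁺` (`p ≥ 2`, `c ≠ 0`), the Rayleigh quotient of fourth-order stiffness
against consistent mass satisfies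
`ε⁴ · (∫₀^ε f″² dx)/(∫₀^ε f² dx) → p²·(p−1)²·(2p+1)/(2p−3)` as `ε → 0⁺`. -/
theorem rayleigh_fourth_order_consistent_mass
    (p : ℕ) (hp : 2 ≤ p) (c : ℝ) (hc : c ≠ 0) (f : ℝ → ℝ)
    (hf : ContinuousOn f (Icc 0 1))
    (hdf : DifferentiableOn ℝ f (Ioc 0 1))
    (hdf2 : DifferentiableOn ℝ (deriv f) (Ioc 0 1))
    (hdf2' : ContinuousOn (deriv (deriv f)) (Ioc 0 1))
    (hasymp : Tendsto (fun x => (f x - c * x ^ p) / x ^ p) (𝓝[>] (0:ℝ)) (𝓝 0))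
    (hasymp2 : Tendsto
      (fun x => (deriv (deriv f) x - c * (p : ℝ) * ((p : ℝ) - 1) * x ^ (p - 2)) /
        x ^ (p - 2))
      (𝓝[>] (0:ℝ)) (𝓝 0)) :
    Tendsto (fun ε =>
        ε ^ 4 * (∫ x in (0:ℝ)..ε, (deriv (deriv f) x) ^ 2) /
          (∫ x in (0:ℝ)..ε, (f x) ^ 2))
      (𝓝[>] (0:ℝ))
      (𝓝 ((p : ℝ) ^ 2 * ((p : ℝ) - 1) ^ 2 * (2 * (p : ℝ) + 1) / (2 * (p : ℝ) - 3))) := by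
  have hP : (2:ℝ) ≤ (p:ℝ) := by exact_mod_cast hp
  set A : ℝ := c * (p:ℝ) * ((p:ℝ) - 1) with hAdef
  -- Step 1: f x / x^p → c
  have t_f : Tendsto (fun x => f x / x ^ p) (𝓝[>] (0:ℝ)) (𝓝 c) := by
    have h1 : Tendsto (fun x => (f x - c * x ^ p) / x ^ p + c) (𝓝[>] (0:ℝ)) (𝓝 (0 + c)) :=
      hasymp.add tendsto_const_nhds
    rw [zero_add] at h1
    refine Tendsto.congr' ?_ h1
    filter_upwards [self_mem_nhdsWithin] with x hx
    have hx0 : x ≠ 0 := ne_of_gt hx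
    field_simp
    ring
  -- Step 2: f'' x / x^(p-2) → A
  have t_f2 : Tendsto (fun x => deriv (deriv f) x / x ^ (p-2)) (𝓝[>] (0:ℝ)) (𝓝 A) := by
    have h1 : Tendsto (fun x => (deriv (deriv f) x - A * x ^ (p-2)) / x ^ (p-2) + A)
        (𝓝[>] (0:ℝ)) (𝓝 (0 + A)) := by
      refine Tendsto.add ?_ tendsto_const_nhds
      exact hasymp2
    rw [zero_add] at h1
    refine Tendsto.congr' ?_ h1
    filter_upwards [self_mem_nhdsWithin] with x hx
    have hx0 : x ≠ 0 := ne_of_gt hx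
    field_simp
    ring
  -- Step 3: mass integral asymptotics
  have tB : Tendsto (fun ε => (∫ x in (0:ℝ)..ε, (f x) ^ 2) / ε ^ (2*p+1)) (𝓝[>] (0:ℝ))
      (𝓝 (c ^ 2 / ((2*(p:ℝ)) + 1))) := by
    have := aux_int (2*p) (c^2) (fun x => (f x)^2) 1 one_pos
      (fun ε hε0 hε1 => ((hf.pow 2).integrableOn_Icc).mono_set
        (Ioc_subset_Icc_self.trans (Icc_subset_Icc_right hε1.le)))
      (by
        have h2 := t_f.pow 2
        refine Tendsto.congr (fun x => ?_) h2
        rw [div_pow, ← pow_mul, mul_comm p 2])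
    convert this using 2
    all_goals (push_cast; ring)
  -- boundedness of f'' near 0 for integrability
  obtain ⟨a₀, ha₀, hbd⟩ : ∃ a₀ > 0, ∀ x : ℝ, 0 < x → x < a₀ →
      |deriv (deriv f) x - A * x ^ (p-2)| ≤ x ^ (p-2) := by
    rw [Metric.tendsto_nhdsWithin_nhds] at hasymp2
    obtain ⟨a₀, ha₀, h⟩ := hasymp2 1 one_pos
    refine ⟨a₀, ha₀, fun x hx0 hxa => ?_⟩
    have := h (show x ∈ Ioi (0:ℝ) from hx0)
      (by rw [Real.dist_eq, sub_zero, abs_of_pos hx0]; exact hxa)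
    rw [Real.dist_eq, sub_zero] at this
    have hxq : (0:ℝ) < x ^ (p-2) := pow_pos hx0 _
    have e : deriv (deriv f) x - A * x ^ (p-2)
        = (deriv (deriv f) x - c * (p:ℝ) * ((p:ℝ)-1) * x ^ (p-2)) := by rw [hAdef]
    rw [e]
    rw [abs_div, abs_of_pos hxq] at this
    have := (div_lt_iff₀ hxq).mp this
    linarith
  -- Step 4: stiffness integral asymptotics
  have tA : Tendsto (fun ε => (∫ x in (0:ℝ)..ε, (deriv (deriv f) x) ^ 2) / ε ^ (2*(p-2)+1))
      (𝓝[>] (0:ℝ)) (𝓝 (A ^ 2 / ((2*(p:ℝ) - 3) - 0 + 0))) := by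
    have hmin : (0:ℝ) < min a₀ 1 := lt_min ha₀ one_pos
    have hintA : ∀ ε : ℝ, 0 < ε → ε < min a₀ 1 →
        IntegrableOn (fun x => (deriv (deriv f) x) ^ 2) (Ioc 0 ε) volume := by
      intro ε hε0 hεm
      have hεa : ε < a₀ := hεm.trans_le (min_le_left _ _)
      have hε1 : ε ≤ 1 := le_of_lt (hεm.trans_le (min_le_right _ _))
      have meas : AEStronglyMeasurable (fun x => (deriv (deriv f) x) ^ 2)
          (volume.restrict (Ioc 0 ε)) :=
        ((measurable_deriv _).pow_const 2).aestronglyMeasurable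
      refine Integrable.mono' (g := fun _ => (|A| + 1) ^ 2)
        ((integrableOn_const_iff (C := (|A| + 1) ^ 2)).mpr (Or.inr measure_Ioc_lt_top)) meas ?_
      rw [ae_restrict_iff' measurableSet_Ioc]
      refine ae_of_all _ (fun x hx => ?_)
      have hx0 : 0 < x := hx.1
      have hx1 : x ≤ 1 := hx.2.trans hε1
      have hxp : x ^ (p-2) ≤ 1 := pow_le_one₀ hx0.le hx1
      have hxp0 : (0:ℝ) ≤ x ^ (p-2) := (pow_pos hx0 _).le
      have h1 := hbd x hx0 (hx.2.trans_lt hεa)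
      have h2 : |deriv (deriv f) x| ≤ |A| + 1 := by
        have : |A * x ^ (p-2)| ≤ |A| := by
          rw [abs_mul, abs_of_nonneg hxp0]
          calc |A| * x ^ (p-2) ≤ |A| * 1 := by
                exact mul_le_mul_of_nonneg_left hxp (abs_nonneg A)
            _ = |A| := mul_one _
        have habs : |deriv (deriv f) x| ≤
            |deriv (deriv f) x - A * x ^ (p-2)| + |A * x ^ (p-2)| := by
          have := abs_add_le (deriv (deriv f) x - A * x ^ (p-2)) (A * x ^ (p-2))
          simpa using this
        have h1' : |deriv (deriv f) x - A * x ^ (p-2)| ≤ 1 := h1.trans hxp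
        linarith
      have : ‖(deriv (deriv f) x) ^ 2‖ = |deriv (deriv f) x| ^ 2 := by
        rw [Real.norm_eq_abs, abs_pow, sq_abs, ← sq_abs]
      rw [this]
      exact pow_le_pow_left₀ (abs_nonneg _) h2 2
    have hlimA : Tendsto (fun x => (deriv (deriv f) x) ^ 2 / x ^ (2*(p-2))) (𝓝[>] (0:ℝ))
        (𝓝 (A ^ 2)) := by
      have h2 := t_f2.pow 2
      refine Tendsto.congr (fun x => ?_) h2
      rw [div_pow, ← pow_mul, mul_comm (p-2) 2]
    have := aux_int (2*(p-2)) (A^2) (fun x => (deriv (deriv f) x)^2) (min a₀ 1) hmin hintA hlimA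
    convert this using 2
    have : ((2*(p-2) : ℕ) : ℝ) = 2*(p:ℝ) - 4 := by
      push_cast [Nat.cast_sub hp]
      ring
    rw [this]
    ring
  -- Step 5: combine
  have hne : c ^ 2 / ((2*(p:ℝ)) + 1) ≠ 0 :=
    div_ne_zero (pow_ne_zero 2 hc) (by positivity)
  have T := tA.div tB hne
  have h3 : (2*(p:ℝ) - 3) ≠ 0 := ne_of_gt (by linarith)
  have h5 : (2*(p:ℝ) + 1) ≠ 0 := ne_of_gt (by linarith)
  have hval : A ^ 2 / ((2*(p:ℝ) - 3) - 0 + 0) / (c ^ 2 / ((2*(p:ℝ)) + 1))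
      = (p:ℝ) ^ 2 * ((p:ℝ) - 1) ^ 2 * (2 * (p:ℝ) + 1) / (2 * (p:ℝ) - 3) := by
    rw [hAdef]
    field_simp
    ring
  rw [hval] at T
  refine Tendsto.congr' ?_ T
  filter_upwards [self_mem_nhdsWithin] with ε hε
  have hε0 : (0:ℝ) < ε := hε
  have hεne : ε ≠ 0 := ne_of_gt hε0
  have h4 : ε ^ (2*p+1) = ε ^ 4 * ε ^ (2*(p-2)+1) := by
    rw [← pow_add]
    congr 1
    omega
  show (∫ x in (0:ℝ)..ε, (deriv (deriv f) x) ^ 2) / ε ^ (2*(p-2)+1) /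
      ((∫ x in (0:ℝ)..ε, (f x) ^ 2) / ε ^ (2*p+1))
    = ε ^ 4 * (∫ x in (0:ℝ)..ε, (deriv (deriv f) x) ^ 2) / (∫ x in (0:ℝ)..ε, (f x) ^ 2)
  rw [h4, div_div_eq_mul_div]
  congr 1
  field_simp
end

section
/- Let d ≥ 1 and p ≥ 1 be integers, ε > 0, and define g : ℝ^d → ℝ by g(x) = ∏_{i=1}^d x_i^p. Then, with all integrals taken over the cube (0,ε)^d, (∫ ‖∇g(x)‖² dx) / (∫ g(x)² dx) = d·p²·(2p+1)/(2p−1) · ε^(−2), where ‖∇g‖² = Σ_{i=1}^d (∂g/∂x_i)². Consequently the generalized Rayleigh quotient of the second-order stiffness against the consistent mass of a corner-cut basis function diverges like ε^(−2) as the corner-cut size ε tends to zero, for every polynomial degree p and every spatial dimension d. -/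
open MeasureTheory Filter Set Topology

lemma pi_set_integral_prod {d : ℕ} {s : Set ℝ} (hs : MeasurableSet s)
    (f : Fin d → ℝ → ℝ) :
    ∫ x in Set.univ.pi fun _ : Fin d => s, ∏ i, f i (x i)
      = ∏ i, ∫ t in s, f i t := by
  rw [← integral_indicator (MeasurableSet.univ_pi fun _ => hs)]
  have h : (Set.univ.pi fun _ : Fin d => s).indicator (fun x => ∏ i, f i (x i))
      = fun x => ∏ i, s.indicator (f i) (x i) := by
    funext x
    by_cases h : x ∈ Set.univ.pi fun _ : Fin d => s
    · rw [indicator_of_mem h]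
      exact Finset.prod_congr rfl fun i _ =>
        (indicator_of_mem (h i (mem_univ i)) _).symm
    · rw [indicator_of_notMem h]
      rw [Set.mem_univ_pi] at h
      push_neg at h
      obtain ⟨j, hj⟩ := h
      exact (Finset.prod_eq_zero (Finset.mem_univ j)
        (indicator_of_notMem hj _)).symm
  rw [h, MeasureTheory.integral_fintype_prod_volume_eq_prod]
  exact Finset.prod_congr rfl fun i _ => integral_indicator hs

lemma ioo_integral_pow {ε : ℝ} (hε : 0 < ε) (n : ℕ) :
    ∫ t in Set.Ioo (0:ℝ) ε, t ^ n = ε ^ (n + 1) / (n + 1) := by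
  rw [← MeasureTheory.integral_Ioc_eq_integral_Ioo,
    ← intervalIntegral.integral_of_le hε.le, integral_pow]
  simp

lemma fderiv_prod_pow {d p : ℕ} (x : Fin d → ℝ) (k : Fin d) :
    fderiv ℝ (fun x : Fin d → ℝ => ∏ i, (x i) ^ p) x (Pi.single k (1:ℝ))
      = (∏ j ∈ Finset.univ.erase k, (x j) ^ p) * ((p : ℝ) * (x k) ^ (p - 1)) := by
  have H := HasFDerivAt.finset_prod (u := Finset.univ)
    (g := fun (i : Fin d) (x : Fin d → ℝ) => (x i) ^ p)
    (g' := fun i => ((p : ℝ) * (x i) ^ (p - 1)) • ContinuousLinearMap.proj i)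
    (x := x)
    (fun i _ => by
      have h2 : HasFDerivAt (fun y : Fin d → ℝ => y i)
          (ContinuousLinearMap.proj (R := ℝ) (φ := fun _ : Fin d => ℝ) i) x :=
        (ContinuousLinearMap.proj (R := ℝ) (φ := fun _ : Fin d => ℝ) i).hasFDerivAt
      exact (hasDerivAt_pow p (x i)).comp_hasFDerivAt x h2)
  rw [show fderiv ℝ (fun x : Fin d → ℝ => ∏ i, (x i) ^ p) x = _ from H.fderiv]
  simp only [ContinuousLinearMap.coe_sum', Finset.sum_apply,
    ContinuousLinearMap.coe_smul', Pi.smul_apply, ContinuousLinearMap.proj_apply,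
    smul_eq_mul]
  rw [Finset.sum_eq_single k]
  · simp [mul_assoc]
  · intro i _ hik
    simp [Pi.single_eq_of_ne hik]
  · simp

lemma sq_term {d p : ℕ} (hp : 1 ≤ p) (x : Fin d → ℝ) (k : Fin d) :
    ((∏ j ∈ Finset.univ.erase k, (x j) ^ p) * ((p : ℝ) * (x k) ^ (p - 1))) ^ 2
      = ∏ j, (if j = k then (p : ℝ) ^ 2 * (x j) ^ (2 * p - 2) else (x j) ^ (2 * p)) := by
  rw [← Finset.mul_prod_erase Finset.univ _ (Finset.mem_univ k), if_pos rfl]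
  rw [Finset.prod_congr rfl (fun j hj => if_neg (Finset.ne_of_mem_erase hj))]
  rw [mul_pow, mul_pow, ← pow_mul, ← Finset.prod_pow]
  simp_rw [← pow_mul]
  rw [show (p - 1) * 2 = 2 * p - 2 from by omega, show p * 2 = 2 * p from by ring]
  ring

/-- For `g x = ∏ i, (x i)^p` on the cube `(0,ε)^d` (`d,p ≥ 1`, `ε > 0`),
`(∫ ‖∇g‖² dx)/(∫ g² dx) = d·p²·(2p+1)/(2p−1) · ε^(−2)`,
where `‖∇g‖² = Σᵢ (∂g/∂xᵢ)²`. -/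
theorem corner_cut_rayleigh_consistent_mass
    (d p : ℕ) (hd : 1 ≤ d) (hp : 1 ≤ p) (ε : ℝ) (hε : 0 < ε)
    (g : (Fin d → ℝ) → ℝ) (hg : g = fun x => ∏ i, (x i) ^ p) :
    (∫ x in Set.univ.pi fun _ : Fin d => Set.Ioo (0:ℝ) ε,
        ∑ i, (fderiv ℝ g x (Pi.single i 1)) ^ 2) /
      (∫ x in Set.univ.pi fun _ : Fin d => Set.Ioo (0:ℝ) ε, (g x) ^ 2)
      = (d : ℝ) * (p : ℝ) ^ 2 * (2 * (p : ℝ) + 1) / (2 * (p : ℝ) - 1) *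
          ε ^ (-2 : ℤ) := by
  subst hg
  have hp1 : (1:ℝ) ≤ (p:ℝ) := by exact_mod_cast hp
  have hA : ∫ t in Set.Ioo (0:ℝ) ε, t ^ (2 * p)
      = ε ^ (2 * p + 1) / (2 * (p:ℝ) + 1) := by
    rw [ioo_integral_pow hε]; push_cast; ring_nf
  have hB : ∫ t in Set.Ioo (0:ℝ) ε, (p:ℝ) ^ 2 * t ^ (2 * p - 2)
      = (p:ℝ) ^ 2 * (ε ^ (2 * p - 1) / (2 * (p:ℝ) - 1)) := by
    rw [MeasureTheory.integral_const_mul, ioo_integral_pow hε,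
      show 2 * p - 2 + 1 = 2 * p - 1 from by omega]
    have : ((2 * p - 2 : ℕ) : ℝ) + 1 = 2 * (p:ℝ) - 1 := by
      rw [Nat.cast_sub (by omega : 2 ≤ 2 * p)]; push_cast; ring
    rw [this]
  -- integrability on the cube
  have hcomp : IsCompact (Set.univ.pi fun _ : Fin d => Set.Icc (0:ℝ) ε) :=
    isCompact_univ_pi fun _ => isCompact_Icc
  have hsub : (Set.univ.pi fun _ : Fin d => Set.Ioo (0:ℝ) ε)
      ⊆ Set.univ.pi fun _ : Fin d => Set.Icc (0:ℝ) ε :=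
    Set.pi_mono fun i _ => Set.Ioo_subset_Icc_self
  -- numerator
  have hN : (∫ x in Set.univ.pi fun _ : Fin d => Set.Ioo (0:ℝ) ε,
      ∑ i, (fderiv ℝ (fun x => ∏ i, (x i) ^ p) x (Pi.single i 1)) ^ 2)
      = (d:ℝ) * (((p:ℝ) ^ 2 * (ε ^ (2 * p - 1) / (2 * (p:ℝ) - 1))) *
          (ε ^ (2 * p + 1) / (2 * (p:ℝ) + 1)) ^ (d - 1)) := by
    have hrw : (fun x : Fin d → ℝ =>
        ∑ i, (fderiv ℝ (fun x => ∏ i, (x i) ^ p) x (Pi.single i 1)) ^ 2)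
        = fun x => ∑ k, ∏ j,
            (if j = k then (p : ℝ) ^ 2 * (x j) ^ (2 * p - 2) else (x j) ^ (2 * p)) := by
      funext x
      exact Finset.sum_congr rfl fun k _ => by rw [fderiv_prod_pow, sq_term hp]
    rw [hrw]
    rw [MeasureTheory.integral_finset_sum]
    · have : ∀ k : Fin d, (∫ x in Set.univ.pi fun _ : Fin d => Set.Ioo (0:ℝ) ε,
          ∏ j, (if j = k then (p : ℝ) ^ 2 * (x j) ^ (2 * p - 2) else (x j) ^ (2 * p)))
          = ((p:ℝ) ^ 2 * (ε ^ (2 * p - 1) / (2 * (p:ℝ) - 1))) *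
            (ε ^ (2 * p + 1) / (2 * (p:ℝ) + 1)) ^ (d - 1) := by
        intro k
        rw [pi_set_integral_prod measurableSet_Ioo
          (fun j t => if j = k then (p : ℝ) ^ 2 * t ^ (2 * p - 2) else t ^ (2 * p))]
        rw [← Finset.mul_prod_erase Finset.univ _ (Finset.mem_univ k)]
        simp only [if_pos rfl, if_true]
        have eprod : (∏ j ∈ Finset.univ.erase k, ∫ t in Set.Ioo (0:ℝ) ε,
              if j = k then (p : ℝ) ^ 2 * t ^ (2 * p - 2) else t ^ (2 * p))
            = ∏ j ∈ Finset.univ.erase k, ∫ t in Set.Ioo (0:ℝ) ε, t ^ (2 * p) :=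
          Finset.prod_congr rfl fun j hj => by
            simp only [if_neg (Finset.ne_of_mem_erase hj)]
        rw [eprod, hB, Finset.prod_congr rfl (fun j _ => hA), Finset.prod_const,
          Finset.card_erase_of_mem (Finset.mem_univ k), Finset.card_univ, Fintype.card_fin]
      simp_rw [this, Finset.sum_const, Finset.card_univ, Fintype.card_fin, nsmul_eq_mul]
    · intro k _
      have hcont : Continuous fun x : Fin d → ℝ =>
          ∏ j, (if j = k then (p : ℝ) ^ 2 * (x j) ^ (2 * p - 2) else (x j) ^ (2 * p)) := by
        apply continuous_finset_prod
        intro j _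
        by_cases h : j = k
        · simp only [if_pos h]; fun_prop
        · simp only [if_neg h]; fun_prop
      exact (hcont.continuousOn.integrableOn_compact hcomp).mono_set hsub
  -- denominator
  have hD : (∫ x in Set.univ.pi fun _ : Fin d => Set.Ioo (0:ℝ) ε,
      ((fun x : Fin d → ℝ => ∏ i, (x i) ^ p) x) ^ 2)
      = (ε ^ (2 * p + 1) / (2 * (p:ℝ) + 1)) ^ d := by
    have hrw : (fun x : Fin d → ℝ => ((fun x : Fin d → ℝ => ∏ i, (x i) ^ p) x) ^ 2)
        = fun x => ∏ i, (x i) ^ (2 * p) := by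
      funext x
      simp only
      rw [← Finset.prod_pow]
      exact Finset.prod_congr rfl fun i _ => by
        rw [← pow_mul, show p * 2 = 2 * p from by ring]
    rw [hrw, pi_set_integral_prod measurableSet_Ioo (fun _ t => t ^ (2 * p)),
      Finset.prod_congr rfl (fun i _ => hA), Finset.prod_const, Finset.card_univ,
      Fintype.card_fin]
  rw [hN, hD]
  -- final algebra
  have h2pm : (0:ℝ) < 2 * (p:ℝ) - 1 := by nlinarith
  have h2pp : (0:ℝ) < 2 * (p:ℝ) + 1 := by nlinarith
  have hXpos : (0:ℝ) < ε ^ (2 * p + 1) / (2 * (p:ℝ) + 1) := by positivity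
  have hXd : (ε ^ (2 * p + 1) / (2 * (p:ℝ) + 1)) ^ d
      = (ε ^ (2 * p + 1) / (2 * (p:ℝ) + 1)) ^ (d - 1) *
        (ε ^ (2 * p + 1) / (2 * (p:ℝ) + 1)) := by
    rw [← pow_succ]; congr 1; omega
  have hεsplit : ε ^ (2 * p + 1) = ε ^ (2 * p - 1) * ε ^ 2 := by
    rw [← pow_add]; congr 1; omega
  have hz : ε ^ (-2 : ℤ) = (ε ^ 2)⁻¹ := by
    rw [show (-2 : ℤ) = -((2:ℕ):ℤ) from by norm_num, zpow_neg, zpow_natCast]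
  rw [hXd, hz, hεsplit]
  have hXne : (ε ^ (2 * p + 1) / (2 * (p:ℝ) + 1)) ^ (d - 1) ≠ 0 :=
    pow_ne_zero _ (ne_of_gt hXpos)
  field_simp
end

section
/- Let d ≥ 1 and p ≥ 1 be integers, ε > 0, and define g : ℝ^d → ℝ by g(x) = ∏_{i=1}^d x_i^p. Then, with all integrals taken over the cube (0,ε)^d, (∫ ‖∇g(x)‖² dx) / (∫ g(x) dx) = d·p²·(p+1)^d / ((2p−1)·(2p+1)^(d−1)) · ε^(pd−2), where ‖∇g‖² = Σ_{i=1}^d (∂g/∂x_i)². Consequently the quotient of second-order stiffness to row-sum lumped mass of a corner-cut basis function diverges as ε → 0⁺ if and only if p·d < 2, i.e. precisely for d = 1 and p = 1. -/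
open MeasureTheory Filter Set Topology

lemma cube_int {d : ℕ} (I : Set ℝ) (hI : MeasurableSet I) (f : Fin d → ℝ → ℝ) :
    ∫ x in Set.univ.pi fun _ : Fin d => I, ∏ i, f i (x i) = ∏ i, ∫ t in I, f i t := by
  rw [← integral_indicator (MeasurableSet.univ_pi fun _ => hI)]
  have h : (Set.univ.pi fun _ : Fin d => I).indicator (fun x => ∏ i, f i (x i))
      = fun x => ∏ i, I.indicator (f i) (x i) := by
    funext x
    by_cases hx : x ∈ Set.univ.pi fun _ : Fin d => I
    · rw [Set.indicator_of_mem hx]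
      exact Finset.prod_congr rfl fun i _ =>
        (Set.indicator_of_mem (hx i (Set.mem_univ i)) _).symm
    · rw [Set.indicator_of_notMem hx]
      have hx' : ∃ i, x i ∉ I := by simpa [Set.mem_pi] using hx
      obtain ⟨i, hi⟩ := hx'
      exact (Finset.prod_eq_zero (Finset.mem_univ i) (Set.indicator_of_notMem hi _)).symm
  rw [h, MeasureTheory.integral_fintype_prod_volume_eq_prod (fun i => I.indicator (f i))]
  exact Finset.prod_congr rfl fun i _ => integral_indicator hI

lemma ioo_int_pow {ε : ℝ} (hε : 0 < ε) (n : ℕ) :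
    ∫ t in Set.Ioo (0:ℝ) ε, t ^ n = ε ^ (n+1) / (n+1) := by
  rw [← MeasureTheory.integral_Ioc_eq_integral_Ioo,
    ← intervalIntegral.integral_of_le hε.le, integral_pow]
  simp

/-- For `g x = ∏ i, (x i)^p` on the cube `(0,ε)^d` (`d,p ≥ 1`, `ε > 0`),
`(∫ ‖∇g‖² dx)/(∫ g dx) = d·p²·(p+1)^d / ((2p−1)·(2p+1)^(d−1)) · ε^(pd−2)`. -/
theorem corner_cut_rayleigh_lumped_mass
    (d p : ℕ) (hd : 1 ≤ d) (hp : 1 ≤ p) (ε : ℝ) (hε : 0 < ε)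
    (g : (Fin d → ℝ) → ℝ) (hg : g = fun x => ∏ i, (x i) ^ p) :
    (∫ x in Set.univ.pi fun _ : Fin d => Set.Ioo (0:ℝ) ε,
        ∑ i, (fderiv ℝ g x (Pi.single i 1)) ^ 2) /
      (∫ x in Set.univ.pi fun _ : Fin d => Set.Ioo (0:ℝ) ε, g x)
      = (d : ℝ) * (p : ℝ) ^ 2 * ((p : ℝ) + 1) ^ d /
          ((2 * (p : ℝ) - 1) * (2 * (p : ℝ) + 1) ^ (d - 1)) *
          ε ^ ((p : ℤ) * (d : ℤ) - 2) := by
  subst hg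
  set S := Set.univ.pi fun _ : Fin d => Set.Ioo (0:ℝ) ε with hS
  -- the partial derivative
  have hDval : ∀ (x : Fin d → ℝ) (i : Fin d),
      fderiv ℝ (fun x : Fin d → ℝ => ∏ i, (x i) ^ p) x (Pi.single i 1)
        = (p : ℝ) * (x i) ^ (p - 1) * ∏ j ∈ Finset.univ.erase i, (x j) ^ p := by
    intro x i
    have hder : HasFDerivAt (fun x : Fin d → ℝ => ∏ i, (x i) ^ p)
        (∑ j, (∏ k ∈ Finset.univ.erase j, (x k) ^ p) •
          (((p : ℝ) * (x j) ^ (p - 1)) •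
            (ContinuousLinearMap.proj j : ((Fin d) → ℝ) →L[ℝ] ℝ))) x := by
      apply HasFDerivAt.finset_prod
      intro j _
      exact (hasDerivAt_pow p (x j)).comp_hasFDerivAt x
        ((ContinuousLinearMap.proj j : ((Fin d) → ℝ) →L[ℝ] ℝ).hasFDerivAt)
    rw [hder.fderiv]
    simp only [ContinuousLinearMap.coe_sum', Finset.sum_apply,
      ContinuousLinearMap.coe_smul', Pi.smul_apply, ContinuousLinearMap.proj_apply,
      Pi.single_apply, smul_eq_mul]
    rw [Finset.sum_eq_single i]
    · simp [mul_comm]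
    · intro j _ hj
      simp [hj]
    · simp
  simp only [hDval]
  -- squared summand as a product of 1D functions
  set f : Fin d → Fin d → ℝ → ℝ := fun i k =>
    if k = i then (fun t => (p : ℝ) ^ 2 * t ^ (2*p - 2)) else (fun t => t ^ (2*p)) with hf
  have key : ∀ (x : Fin d → ℝ) (i : Fin d),
      ((p : ℝ) * (x i) ^ (p - 1) * ∏ j ∈ Finset.univ.erase i, (x j) ^ p) ^ 2
        = ∏ k, f i k (x k) := by
    intro x i
    rw [← Finset.mul_prod_erase Finset.univ (fun k => f i k (x k)) (Finset.mem_univ i)]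
    have h1 : f i i (x i) = (p : ℝ) ^ 2 * (x i) ^ (2*p - 2) := by simp [hf]
    have h2 : ∏ k ∈ Finset.univ.erase i, f i k (x k)
        = ∏ k ∈ Finset.univ.erase i, (x k) ^ (2*p) := by
      refine Finset.prod_congr rfl fun k hk => ?_
      simp [hf, Finset.ne_of_mem_erase hk]
    rw [h1, h2, mul_pow, mul_pow, ← Finset.prod_pow]
    have h3 : ∀ k : Fin d, ((x k) ^ p) ^ 2 = (x k) ^ (2*p) := by
      intro k; rw [← pow_mul, mul_comm]
    simp_rw [h3, ← pow_mul]
    have h4 : (p - 1) * 2 = 2*p - 2 := by omega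
    rw [h4]
  have hmeas : MeasurableSet (Set.Ioo (0:ℝ) ε) := measurableSet_Ioo
  -- integrability of each summand
  have hint : ∀ i : Fin d, IntegrableOn
      (fun x : Fin d → ℝ =>
        ((p : ℝ) * (x i) ^ (p - 1) * ∏ j ∈ Finset.univ.erase i, (x j) ^ p) ^ 2) S := by
    intro i
    have hcont : Continuous (fun x : Fin d → ℝ =>
        ((p : ℝ) * (x i) ^ (p - 1) * ∏ j ∈ Finset.univ.erase i, (x j) ^ p) ^ 2) := by
      fun_prop
    have hcomp : IsCompact (Set.univ.pi fun _ : Fin d => Set.Icc (0:ℝ) ε) :=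
      isCompact_univ_pi fun _ => isCompact_Icc
    exact (hcont.continuousOn.integrableOn_compact hcomp).mono_set
      (Set.pi_mono fun i _ => Set.Ioo_subset_Icc_self)
  -- numerator
  have hnum : (∫ x in S, ∑ i, ((p : ℝ) * (x i) ^ (p - 1) *
        ∏ j ∈ Finset.univ.erase i, (x j) ^ p) ^ 2)
      = (d : ℝ) * (((p : ℝ) ^ 2 * (ε ^ (2*p - 1) / (2*p - 1))) *
          (ε ^ (2*p + 1) / (2*p + 1)) ^ (d - 1)) := by
    rw [MeasureTheory.integral_finset_sum _ fun i _ => hint i]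
    have hterm : ∀ i : Fin d,
        (∫ x in S, ((p : ℝ) * (x i) ^ (p - 1) *
          ∏ j ∈ Finset.univ.erase i, (x j) ^ p) ^ 2)
        = ((p : ℝ) ^ 2 * (ε ^ (2*p - 1) / (2*p - 1))) *
            (ε ^ (2*p + 1) / (2*p + 1)) ^ (d - 1) := by
      intro i
      have : (∫ x in S, ((p : ℝ) * (x i) ^ (p - 1) *
          ∏ j ∈ Finset.univ.erase i, (x j) ^ p) ^ 2)
          = ∫ x in S, ∏ k, f i k (x k) := by
        exact MeasureTheory.setIntegral_congr_fun
          (MeasurableSet.univ_pi fun _ => hmeas) (fun x _ => key x i)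
      rw [this, cube_int _ hmeas]
      rw [← Finset.mul_prod_erase Finset.univ
        (fun k => ∫ t in Set.Ioo (0:ℝ) ε, f i k t) (Finset.mem_univ i)]
      have hii : (∫ t in Set.Ioo (0:ℝ) ε, f i i t)
          = (p : ℝ) ^ 2 * (ε ^ (2*p - 1) / (2*p - 1)) := by
        simp only [hf, if_pos rfl]
        rw [MeasureTheory.integral_const_mul, ioo_int_pow hε,
          (by omega : 2*p - 2 + 1 = 2*p - 1)]
        push_cast [Nat.cast_sub (by omega : 2 ≤ 2*p)]
        try ring_nf
      have hothers : ∏ k ∈ Finset.univ.erase i, (∫ t in Set.Ioo (0:ℝ) ε, f i k t)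
          = (ε ^ (2*p + 1) / (2*p + 1)) ^ (d - 1) := by
        have : ∀ k ∈ Finset.univ.erase i, (∫ t in Set.Ioo (0:ℝ) ε, f i k t)
            = ε ^ (2*p + 1) / ((2*p : ℕ) + 1 : ℝ) := by
          intro k hk
          simp only [hf, if_neg (Finset.ne_of_mem_erase hk)]
          rw [ioo_int_pow hε]
        rw [Finset.prod_congr rfl this, Finset.prod_const,
          Finset.card_erase_of_mem (Finset.mem_univ i), Finset.card_univ, Fintype.card_fin]
        push_cast
        try ring_nf
      rw [hii, hothers]
    rw [Finset.sum_congr rfl fun i _ => hterm i, Finset.sum_const, Finset.card_univ,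
      Fintype.card_fin, nsmul_eq_mul]
  -- denominator
  have hden : (∫ x in S, ∏ i, (x i) ^ p) = (ε ^ (p + 1) / ((p : ℝ) + 1)) ^ d := by
    rw [hS,
      show (∫ x in Set.univ.pi fun _ : Fin d => Set.Ioo (0:ℝ) ε, ∏ i, (x i) ^ p)
        = ∏ _i : Fin d, ∫ t in Set.Ioo (0:ℝ) ε, t ^ p from
          cube_int _ hmeas fun _ t => t ^ p]
    simp_rw [ioo_int_pow hε]
    rw [Finset.prod_const, Finset.card_univ, Fintype.card_fin]
    try push_cast
    try ring_nf
  rw [hnum, hden]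
  -- arithmetic
  have hεne : ε ≠ 0 := hε.ne'
  have hpR : (1:ℝ) ≤ (p : ℝ) := by exact_mod_cast hp
  have h2p1 : (2 * (p:ℝ) - 1) ≠ 0 := by nlinarith
  have h2p2 : (2 * (p:ℝ) + 1) ≠ 0 := by positivity
  have hp1 : ((p:ℝ) + 1) ≠ 0 := by positivity
  have hz : ε ^ ((p : ℤ) * (d : ℤ) - 2)
      = ε ^ (2*p - 1 + (2*p + 1)*(d - 1)) / ε ^ ((p + 1)*d) := by
    rw [eq_div_iff (pow_ne_zero _ hεne), ← zpow_natCast ε (2*p - 1 + (2*p + 1)*(d - 1)),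
      ← zpow_natCast ε ((p + 1)*d), ← zpow_add₀ hεne]
    congr 1
    have h1 : ((2*p - 1 : ℕ) : ℤ) = 2*(p:ℤ) - 1 := by omega
    have h2 : ((d - 1 : ℕ) : ℤ) = (d:ℤ) - 1 := by omega
    push_cast [h1, h2]
    ring
  rw [hz]
  have hc1 : ((p:ℝ) * 2 - 1) ≠ 0 := by nlinarith
  have e1 : ε ^ (2*p - 1 + (2*p + 1)*(d - 1))
      = ε ^ (2*p - 1) * (ε ^ (2*p + 1)) ^ (d - 1) := by rw [pow_add, pow_mul]
  have e2 : ε ^ ((p + 1)*d) = (ε ^ (p + 1)) ^ d := by rw [pow_mul]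
  rw [e1, e2]
  field_simp
  ring_nf
  have ha : (1 + (p:ℝ) * 2)⁻¹ ^ (d - 1) * (1 + (p:ℝ) * 2) ^ (d - 1) = 1 := by
    rw [← mul_pow, inv_mul_cancel₀ (by positivity), one_pow]
  have hb : (1 + (p:ℝ))⁻¹ ^ d * (1 + (p:ℝ)) ^ d = 1 := by
    rw [← mul_pow, inv_mul_cancel₀ (by positivity), one_pow]
  rw [mul_assoc _ ((1 + (p:ℝ) * 2)⁻¹ ^ (d - 1)), ha, mul_assoc _ ((1 + (p:ℝ))⁻¹ ^ d), hb]
end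

section
/- Let d ≥ 2 and p ≥ 2 be integers, ε > 0, and define g : ℝ^d → ℝ by g(x) = ∏_{i=1}^d x_i^p. Then, with all integrals taken over the cube (0,ε)^d and Δg = Σ_{i=1}^d ∂²g/∂x_i², (∫ (Δg(x))² dx) / (∫ g(x) dx) = p²·(p−1)²·(p+1)^d · [ d/((2p−3)·(2p+1)^(d−1)) + d·(d−1)/((2p−1)²·(2p+1)^(d−2)) ] · ε^(pd−4). Consequently the quotient of fourth-order stiffness to row-sum lumped mass of a corner-cut basis function scales as ε^(pd−4), and diverges as ε → 0⁺ precisely when p·d < 4. -/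
open MeasureTheory Filter Set Topology

lemma hasFDerivAt_monomial {d : ℕ} (e : Fin d → ℕ) (x : Fin d → ℝ) :
    HasFDerivAt (fun y : Fin d → ℝ => ∏ i, (y i) ^ (e i))
      (∑ i, (∏ j ∈ Finset.univ.erase i, (x j) ^ (e j)) •
        (((e i : ℝ) * (x i) ^ (e i - 1)) •
          (ContinuousLinearMap.proj i : (Fin d → ℝ) →L[ℝ] ℝ))) x := by
  exact HasFDerivAt.finset_prod fun i _ =>
    (hasDerivAt_pow (e i) (x i)).comp_hasFDerivAt x (hasFDerivAt_apply i x)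

lemma fderiv_monomial_single {d : ℕ} (e : Fin d → ℕ) (x : Fin d → ℝ) (k : Fin d) :
    fderiv ℝ (fun y : Fin d → ℝ => ∏ i, (y i) ^ (e i)) x (Pi.single k 1)
      = (e k : ℝ) * (x k) ^ (e k - 1) * ∏ j ∈ Finset.univ.erase k, (x j) ^ (e j) := by
  rw [(hasFDerivAt_monomial e x).fderiv]
  rw [ContinuousLinearMap.sum_apply]
  rw [Finset.sum_eq_single k]
  · simp [mul_comm]
  · intro i _ hik
    simp [Pi.single_apply, hik.symm]
  · simp

lemma indicator_pi_prod {d : ℕ} (s : Set ℝ) (f : Fin d → ℝ → ℝ) (x : Fin d → ℝ) :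
    (Set.univ.pi fun _ : Fin d => s).indicator (fun x => ∏ i, f i (x i)) x
      = ∏ i, s.indicator (f i) (x i) := by
  by_cases h : x ∈ Set.univ.pi fun _ : Fin d => s
  · rw [Set.indicator_of_mem h]
    exact Finset.prod_congr rfl fun i _ =>
      (Set.indicator_of_mem (h i (Set.mem_univ i)) _).symm
  · rw [Set.indicator_of_notMem h]
    simp only [Set.mem_pi, Set.mem_univ, forall_true_left, not_forall] at h
    obtain ⟨i, hi⟩ := h
    exact (Finset.prod_eq_zero (Finset.mem_univ i)
      (Set.indicator_of_notMem hi _)).symm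

lemma integrableOn_pi_prod {d : ℕ} (s : Set ℝ) (hs : MeasurableSet s)
    (f : Fin d → ℝ → ℝ) (hf : ∀ i, IntegrableOn (f i) s) :
    IntegrableOn (fun x : Fin d → ℝ => ∏ i, f i (x i))
      (Set.univ.pi fun _ : Fin d => s) := by
  rw [← integrable_indicator_iff (MeasurableSet.univ_pi fun _ => hs)]
  have : (Set.univ.pi fun _ : Fin d => s).indicator (fun x => ∏ i, f i (x i))
      = fun x => ∏ i, s.indicator (f i) (x i) := funext (indicator_pi_prod s f)
  rw [this]
  exact Integrable.fintype_prod fun i => (integrable_indicator_iff hs).2 (hf i)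

lemma setIntegral_pi_prod {d : ℕ} (s : Set ℝ) (hs : MeasurableSet s)
    (f : Fin d → ℝ → ℝ) :
    ∫ x in Set.univ.pi fun _ : Fin d => s, ∏ i, f i (x i)
      = ∏ i, ∫ x in s, f i x := by
  rw [← integral_indicator (MeasurableSet.univ_pi fun _ => hs)]
  have : (Set.univ.pi fun _ : Fin d => s).indicator (fun x => ∏ i, f i (x i))
      = fun x => ∏ i, s.indicator (f i) (x i) := funext (indicator_pi_prod s f)
  rw [this, integral_fintype_prod_volume_eq_prod (fun i => s.indicator (f i))]
  exact Finset.prod_congr rfl fun i _ => integral_indicator hs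

lemma integral_Ioo_pow {ε : ℝ} (hε : 0 < ε) (n : ℕ) :
    ∫ x in Set.Ioo (0:ℝ) ε, x ^ n = ε ^ (n + 1) / (n + 1) := by
  rw [← integral_Ioc_eq_integral_Ioo, ← intervalIntegral.integral_of_le hε.le,
    integral_pow]
  simp

lemma integrableOn_Ioo_pow {ε : ℝ} (n : ℕ) :
    IntegrableOn (fun x : ℝ => x ^ n) (Set.Ioo (0:ℝ) ε) :=
  (intervalIntegral.intervalIntegrable_pow n).1.mono_set Set.Ioo_subset_Ioc_self

lemma hinner {d p : ℕ} (i : Fin d) :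
    (fun y : Fin d → ℝ => fderiv ℝ (fun x : Fin d → ℝ => ∏ j, (x j) ^ p) y (Pi.single i 1))
      = fun y => (p : ℝ) * ∏ j, (y j) ^ (if j = i then p - 1 else p) := by
  funext y
  have h := fderiv_monomial_single (fun _ => p) y i
  rw [h]
  have : ∏ j, (y j) ^ (if j = i then p - 1 else p)
      = (y i) ^ (p - 1) * ∏ j ∈ Finset.univ.erase i, (y j) ^ p := by
    rw [← Finset.mul_prod_erase Finset.univ _ (Finset.mem_univ i), if_pos rfl]
    exact congrArg _ (Finset.prod_congr rfl fun j hj => by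
      rw [if_neg (Finset.ne_of_mem_erase hj)])
  rw [this]; ring

lemma key {d p : ℕ} (hp : 2 ≤ p) (x : Fin d → ℝ) :
    (∑ i, fderiv ℝ
        (fun y => fderiv ℝ (fun x : Fin d → ℝ => ∏ j, (x j) ^ p) y (Pi.single i 1))
        x (Pi.single i 1))
      = (p : ℝ) * ((p : ℝ) - 1) *
        ∑ i, ∏ j, (x j) ^ (if j = i then p - 2 else p) := by
  rw [Finset.mul_sum]
  refine Finset.sum_congr rfl fun i _ => ?_
  rw [hinner i]
  rw [fderiv_const_mul (hasFDerivAt_monomial (fun j => if j = i then p - 1 else p) x).differentiableAt]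
  rw [ContinuousLinearMap.smul_apply, smul_eq_mul, mul_assoc]
  congr 1
  have h := fderiv_monomial_single (fun j => if j = i then p - 1 else p) x i
  simp only [eq_self_iff_true, if_true] at h
  rw [h]
  have h1 : ((p - 1 : ℕ) : ℝ) = (p : ℝ) - 1 := by
    push_cast [Nat.cast_sub (by omega : 1 ≤ p)]; ring
  have h2 : p - 1 - 1 = p - 2 := by omega
  have h3 : ∏ j, (x j) ^ (if j = i then p - 2 else p)
      = (x i) ^ (p - 2) * ∏ j ∈ Finset.univ.erase i, (x j) ^ p := by
    rw [← Finset.mul_prod_erase Finset.univ _ (Finset.mem_univ i), if_pos rfl]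
    exact congrArg _ (Finset.prod_congr rfl fun j hj => by
      rw [if_neg (Finset.ne_of_mem_erase hj)])
  have h4 : ∏ j ∈ Finset.univ.erase i, (x j) ^ (if j = i then p - 1 else p)
      = ∏ j ∈ Finset.univ.erase i, (x j) ^ p :=
    Finset.prod_congr rfl fun j hj => by rw [if_neg (Finset.ne_of_mem_erase hj)]
  rw [h1, h2, h3, h4]; ring

lemma prod_ite1 {n : ℕ} (F : ℕ → ℝ) (a b : ℕ) (i : Fin n) :
    ∏ k, F (if k = i then a else b) = F a * F b ^ (n - 1) := by
  rw [← Finset.mul_prod_erase Finset.univ _ (Finset.mem_univ i), if_pos rfl]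
  congr 1
  have h1 : ∏ j ∈ Finset.univ.erase i, F (if j = i then a else b)
      = ∏ _j ∈ Finset.univ.erase i, F b :=
    Finset.prod_congr rfl fun j hj => by rw [if_neg (Finset.ne_of_mem_erase hj)]
  rw [h1, Finset.prod_const, Finset.card_erase_of_mem (Finset.mem_univ i),
    Finset.card_univ, Fintype.card_fin]

lemma prod_ite2 {n : ℕ} (F : ℕ → ℝ) (a b c : ℕ) (i j : Fin n) (hij : j ≠ i) :
    ∏ k, F (if k = i then a else if k = j then b else c)
      = F a * (F b * F c ^ (n - 2)) := by
  have hj : j ∈ Finset.univ.erase i := Finset.mem_erase.2 ⟨hij, Finset.mem_univ j⟩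
  rw [← Finset.mul_prod_erase Finset.univ _ (Finset.mem_univ i), if_pos rfl]
  congr 1
  rw [← Finset.mul_prod_erase _ _ hj, if_neg hij, if_pos rfl]
  congr 1
  have h1 : ∏ k ∈ (Finset.univ.erase i).erase j, F (if k = i then a else if k = j then b else c)
      = ∏ _k ∈ (Finset.univ.erase i).erase j, F c :=
    Finset.prod_congr rfl fun k hk => by
      rw [if_neg (Finset.ne_of_mem_erase (Finset.mem_of_mem_erase hk)),
        if_neg (Finset.ne_of_mem_erase hk)]
  rw [h1, Finset.prod_const, Finset.card_erase_of_mem hj,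
    Finset.card_erase_of_mem (Finset.mem_univ i), Finset.card_univ, Fintype.card_fin,
    show n - 1 - 1 = n - 2 by omega]


set_option maxHeartbeats 1000000 in
/-- For `g x = ∏ i, (x i)^p` on the cube `(0,ε)^d` (`d ≥ 2`, `p ≥ 2`,
`ε > 0`), with `Δg = Σᵢ ∂²g/∂xᵢ²`,
`(∫ (Δg)² dx)/(∫ g dx) = p²·(p−1)²·(p+1)^d · [ d/((2p−3)·(2p+1)^(d−1))
  + d·(d−1)/((2p−1)²·(2p+1)^(d−2)) ] · ε^(pd−4)`. -/
theorem corner_cut_fourth_order_rayleigh_lumped_mass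
    (d p : ℕ) (hd : 2 ≤ d) (hp : 2 ≤ p) (ε : ℝ) (hε : 0 < ε)
    (g : (Fin d → ℝ) → ℝ) (hg : g = fun x => ∏ i, (x i) ^ p) :
    (∫ x in Set.univ.pi fun _ : Fin d => Set.Ioo (0:ℝ) ε,
        (∑ i, fderiv ℝ (fun y => fderiv ℝ g y (Pi.single i 1)) x (Pi.single i 1)) ^ 2) /
      (∫ x in Set.univ.pi fun _ : Fin d => Set.Ioo (0:ℝ) ε, g x)
      = (p : ℝ) ^ 2 * ((p : ℝ) - 1) ^ 2 * ((p : ℝ) + 1) ^ d *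
          ((d : ℝ) / ((2 * (p : ℝ) - 3) * (2 * (p : ℝ) + 1) ^ (d - 1)) +
            (d : ℝ) * ((d : ℝ) - 1) /
              ((2 * (p : ℝ) - 1) ^ 2 * (2 * (p : ℝ) + 1) ^ (d - 2))) *
          ε ^ ((p : ℤ) * (d : ℤ) - 4) := by
  subst hg
  obtain ⟨p', rfl⟩ : ∃ p', p = p' + 2 := ⟨p - 2, by omega⟩
  obtain ⟨d', rfl⟩ : ∃ d', d = d' + 2 := ⟨d - 2, by omega⟩
  clear hd hp
  set S := Set.univ.pi fun _ : Fin (d' + 2) => Set.Ioo (0:ℝ) ε with hS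
  set F : ℕ → ℝ := fun n => ε ^ (n + 1) / ((n : ℝ) + 1) with hF
  -- pointwise expansion of the squared Laplacian
  have key2 : ∀ x : Fin (d' + 2) → ℝ,
      (∑ i, fderiv ℝ
          (fun y => fderiv ℝ (fun x : Fin (d' + 2) → ℝ => ∏ j, (x j) ^ (p' + 2)) y
            (Pi.single i 1)) x (Pi.single i 1)) ^ 2
        = ((p' + 2 : ℕ) : ℝ) ^ 2 * (((p' + 2 : ℕ) : ℝ) - 1) ^ 2 *
          ∑ i, ∑ j, ∏ k, (x k) ^
            ((if k = i then p' else p' + 2) + (if k = j then p' else p' + 2)) := by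
    intro x
    rw [key (by omega) x]
    simp only [Nat.add_sub_cancel]
    have expand : (∑ i, ∏ j, (x j) ^ (if j = i then p' else p' + 2)) ^ 2
        = ∑ i, ∑ j, ∏ k, (x k) ^
            ((if k = i then p' else p' + 2) + (if k = j then p' else p' + 2)) := by
      rw [pow_two, Finset.sum_mul_sum]
      refine Finset.sum_congr rfl fun i _ => Finset.sum_congr rfl fun j _ => ?_
      rw [← Finset.prod_mul_distrib]
      exact Finset.prod_congr rfl fun k _ => (pow_add _ _ _).symm
    rw [mul_pow, mul_pow, expand]
  -- integrability of monomials on S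
  have hIntMono : ∀ m : Fin (d' + 2) → ℕ,
      IntegrableOn (fun x : Fin (d' + 2) → ℝ => ∏ k, (x k) ^ (m k)) S :=
    fun m => integrableOn_pi_prod _ measurableSet_Ioo _ fun k => integrableOn_Ioo_pow (m k)
  -- value of monomial integrals
  have hmono : ∀ m : Fin (d' + 2) → ℕ,
      (∫ x in S, ∏ k, (x k) ^ (m k)) = ∏ k, F (m k) := by
    intro m
    rw [setIntegral_pi_prod _ measurableSet_Ioo (fun k t => t ^ (m k))]
    exact Finset.prod_congr rfl fun k _ => integral_Ioo_pow hε (m k)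
  -- the (i,j) integrals
  have hIJ : ∀ i j : Fin (d' + 2), j ≠ i →
      (∫ x in S, ∏ k, (x k) ^
          ((if k = i then p' else p' + 2) + (if k = j then p' else p' + 2)))
        = F (2 * p' + 2) * (F (2 * p' + 2) * F (2 * p' + 4) ^ d') := by
    intro i j hij
    have hsplit : ∀ k : Fin (d' + 2),
        (if k = i then p' else p' + 2) + (if k = j then p' else p' + 2)
          = (if k = i then 2 * p' + 2 else if k = j then 2 * p' + 2 else 2 * p' + 4) := by
      intro k
      by_cases h1 : k = i
      · rw [if_pos h1, if_pos h1, if_neg (fun h => hij ((h1.symm.trans h).symm))]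
        omega
      · by_cases h2 : k = j
        · subst h2
          rw [if_neg h1, if_pos rfl, if_neg h1, if_pos rfl]
          omega
        · rw [if_neg h1, if_neg h2, if_neg h1, if_neg h2]
          omega
    simp only [hsplit]
    rw [hmono, prod_ite2 F _ _ _ i j hij]
    norm_num
  have hdiag : ∀ i : Fin (d' + 2),
      (∫ x in S, ∏ k, (x k) ^
          ((if k = i then p' else p' + 2) + (if k = i then p' else p' + 2)))
        = F (2 * p') * F (2 * p' + 4) ^ (d' + 1) := by
    intro i
    have hsplit : ∀ k : Fin (d' + 2),
        (if k = i then p' else p' + 2) + (if k = i then p' else p' + 2)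
          = (if k = i then 2 * p' else 2 * p' + 4) := by
      intro k
      by_cases h1 : k = i
      · subst h1; rw [if_pos rfl, if_pos rfl]; omega
      · rw [if_neg h1, if_neg h1]; omega
    simp only [hsplit]
    rw [hmono, prod_ite1 F _ _ i]
    norm_num
  -- numerator
  have hnum : (∫ x in S,
        (∑ i, fderiv ℝ
          (fun y => fderiv ℝ (fun x : Fin (d' + 2) → ℝ => ∏ j, (x j) ^ (p' + 2)) y
            (Pi.single i 1)) x (Pi.single i 1)) ^ 2)
      = ((p' + 2 : ℕ) : ℝ) ^ 2 * (((p' + 2 : ℕ) : ℝ) - 1) ^ 2 *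
        (((d' + 2 : ℕ) : ℝ) * (F (2 * p') * F (2 * p' + 4) ^ (d' + 1)
          + ((d' + 1 : ℕ) : ℝ) * (F (2 * p' + 2) * (F (2 * p' + 2) * F (2 * p' + 4) ^ d')))) := by
    simp only [key2]
    rw [MeasureTheory.integral_const_mul]
    congr 1
    rw [integral_finset_sum _ (fun i _ =>
      integrable_finset_sum _ (fun j _ => hIntMono
        (fun k => (if k = i then p' else p' + 2) + (if k = j then p' else p' + 2))))]
    have hrow : ∀ i : Fin (d' + 2),
        (∫ x in S, ∑ j, ∏ k, (x k) ^
            ((if k = i then p' else p' + 2) + (if k = j then p' else p' + 2)))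
          = F (2 * p') * F (2 * p' + 4) ^ (d' + 1)
            + ((d' + 1 : ℕ) : ℝ) * (F (2 * p' + 2) * (F (2 * p' + 2) * F (2 * p' + 4) ^ d')) := by
      intro i
      rw [integral_finset_sum _ (fun j _ => hIntMono
        (fun k => (if k = i then p' else p' + 2) + (if k = j then p' else p' + 2)))]
      rw [← Finset.add_sum_erase _ _ (Finset.mem_univ i)]
      congr 1
      · exact hdiag i
      · rw [Finset.sum_congr rfl (fun j hj => hIJ i j (Finset.ne_of_mem_erase hj)),
          Finset.sum_const, Finset.card_erase_of_mem (Finset.mem_univ i),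
          Finset.card_univ, Fintype.card_fin, nsmul_eq_mul]
        norm_num
    rw [Finset.sum_congr rfl (fun i _ => hrow i), Finset.sum_const,
      Finset.card_univ, Fintype.card_fin, nsmul_eq_mul]
  -- denominator
  have hden : (∫ x in S, ∏ i, (x i) ^ (p' + 2)) = F (p' + 2) ^ (d' + 2) := by
    rw [hmono (fun _ => p' + 2), Finset.prod_const, Finset.card_univ, Fintype.card_fin]
  rw [hnum, hden]
  -- final algebra
  have hzpow : ε ^ (((p' + 2 : ℕ) : ℤ) * ((d' + 2 : ℕ) : ℤ) - 4)
      = ε ^ (2 * p' * d' + 4 * p' + 5 * d' + 6) / ε ^ ((p' + 3) * (d' + 2)) := by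
    rw [eq_div_iff (pow_ne_zero _ hε.ne'), ← zpow_natCast ε (2 * p' * d' + 4 * p' + 5 * d' + 6),
      ← zpow_natCast ε ((p' + 3) * (d' + 2)), ← zpow_add₀ hε.ne']
    congr 1
    push_cast
    ring
  rw [hzpow]
  have e1 : d' + 2 - 1 = d' + 1 := by omega
  have e2 : d' + 2 - 2 = d' := by omega
  rw [e1, e2]
  simp only [hF]
  have r1 : 2 * ((p' + 2 : ℕ) : ℝ) - 3 = 2 * (p' : ℝ) + 1 := by push_cast; ring
  have r2 : 2 * ((p' + 2 : ℕ) : ℝ) - 1 = 2 * (p' : ℝ) + 3 := by push_cast; ring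
  have r3 : 2 * ((p' + 2 : ℕ) : ℝ) + 1 = 2 * (p' : ℝ) + 5 := by push_cast; ring
  have r4 : ((p' + 2 : ℕ) : ℝ) - 1 = (p' : ℝ) + 1 := by push_cast; ring
  have r5 : ((p' + 2 : ℕ) : ℝ) + 1 = (p' : ℝ) + 3 := by push_cast; ring
  have r6 : ((d' + 2 : ℕ) : ℝ) - 1 = (d' : ℝ) + 1 := by push_cast; ring
  rw [r1, r2, r3, r4, r5, r6]
  have h1 : (2 * (p' : ℝ) + 1) ≠ 0 := by positivity
  have h2 : (2 * (p' : ℝ) + 3) ≠ 0 := by positivity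
  have h3 : (2 * (p' : ℝ) + 5) ≠ 0 := by positivity
  have h4 : ((p' : ℝ) + 3) ≠ 0 := by positivity
  have hε0 : ε ≠ 0 := hε.ne'
  push_cast
  have h5 : (2 * (p' : ℝ) + 4 + 1) ≠ 0 := by positivity
  have h6 : (2 * (p' : ℝ) + 2 + 1) ≠ 0 := by positivity
  simp only [div_pow]
  field_simp
  ring
end

section
/- Let p ≥ 1 be a natural number, γ_K > 0, γ_M > 0, and J ≠ 0 real numbers. Define for ε ∈ (0,1] the quotient q(ε) = (∫₀^ε p²·x^(2p−2) dx + γ_K·J²) / (∫₀^ε x^(2p) dx + γ_M·J²). Then q(ε) → γ_K/γ_M as ε → 0⁺, and moreover q(ε) ≤ γ_K/γ_M + p²/((2p−1)·γ_M·J²) for all ε ∈ (0,1]. In particular, adding ghost-penalty terms to both the stiffness and the mass renders the generalized Rayleigh quotient of a cut basis function bounded uniformly in the cut size ε. -/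
open MeasureTheory Filter Set Topology

/-- With ghost penalties `γ_K, γ_M > 0` and jump `J ≠ 0`, the quotient
`q(ε) = (∫₀^ε p²·x^(2p−2) dx + γ_K·J²)/(∫₀^ε x^(2p) dx + γ_M·J²)` satisfies
`q(ε) → γ_K/γ_M` as `ε → 0⁺` and `q(ε) ≤ γ_K/γ_M + p²/((2p−1)·γ_M·J²)` on `(0,1]`. -/
theorem ghost_penalty_rayleigh_bounded
    (p : ℕ) (hp : 1 ≤ p) (γK γM J : ℝ) (hγK : 0 < γK) (hγM : 0 < γM) (hJ : J ≠ 0) :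
    Tendsto (fun ε =>
        ((∫ x in (0:ℝ)..ε, (p : ℝ) ^ 2 * x ^ (2 * p - 2)) + γK * J ^ 2) /
          ((∫ x in (0:ℝ)..ε, x ^ (2 * p)) + γM * J ^ 2))
      (𝓝[>] (0:ℝ)) (𝓝 (γK / γM)) ∧
    ∀ ε ∈ Set.Ioc (0:ℝ) 1,
      ((∫ x in (0:ℝ)..ε, (p : ℝ) ^ 2 * x ^ (2 * p - 2)) + γK * J ^ 2) /
          ((∫ x in (0:ℝ)..ε, x ^ (2 * p)) + γM * J ^ 2)
        ≤ γK / γM + (p : ℝ) ^ 2 / ((2 * (p : ℝ) - 1) * γM * J ^ 2) := by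
  obtain ⟨n, hn⟩ : ∃ n, 2 * p = n + 2 := ⟨2 * p - 2, by omega⟩
  have h2p2 : 2 * p - 2 = n := by omega
  have hJ2 : (0:ℝ) < J ^ 2 := by positivity
  have hnum : ∀ ε : ℝ, (∫ x in (0:ℝ)..ε, (p : ℝ) ^ 2 * x ^ (2 * p - 2))
      = (p : ℝ) ^ 2 * (ε ^ (n + 1) / (n + 1)) := by
    intro ε
    rw [h2p2, intervalIntegral.integral_const_mul, integral_pow]
    norm_num
  have hden : ∀ ε : ℝ, (∫ x in (0:ℝ)..ε, x ^ (2 * p)) = ε ^ (n + 3) / (n + 3) := by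
    intro ε
    rw [hn, integral_pow]
    norm_num
    ring_nf
  have hcast : 2 * (p : ℝ) - 1 = ((n : ℝ) + 1) := by
    have : (2 * p : ℕ) = n + 2 := hn
    have := congrArg (Nat.cast : ℕ → ℝ) this
    push_cast at this
    linarith
  constructor
  · have hcont : ContinuousAt (fun ε : ℝ =>
        ((p : ℝ) ^ 2 * (ε ^ (n + 1) / (n + 1)) + γK * J ^ 2) /
          (ε ^ (n + 3) / (n + 3) + γM * J ^ 2)) 0 := by
      apply ContinuousAt.div (by fun_prop) (by fun_prop)
      have : (0:ℝ) ^ (n + 3) = 0 := zero_pow (by omega)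
      rw [this, zero_div, zero_add]
      positivity
    have h0 : ((p : ℝ) ^ 2 * ((0:ℝ) ^ (n + 1) / (n + 1)) + γK * J ^ 2) /
          ((0:ℝ) ^ (n + 3) / (n + 3) + γM * J ^ 2) = γK / γM := by
      rw [zero_pow (by omega : n + 1 ≠ 0), zero_pow (by omega : n + 3 ≠ 0),
        zero_div, zero_div, mul_zero, zero_add, zero_add,
        mul_comm γK, mul_comm γM, mul_div_mul_left _ _ (by positivity : J ^ 2 ≠ 0)]
    have := hcont.tendsto.mono_left (nhdsWithin_le_nhds (s := Set.Ioi (0:ℝ)))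
    rw [h0] at this
    refine Tendsto.congr (fun ε => ?_) this
    rw [hnum, hden]
  · intro ε hε
    obtain ⟨hε0, hε1⟩ := hε
    rw [hnum, hden, hcast]
    have hεp1 : ε ^ (n + 1) ≤ 1 := pow_le_one₀ hε0.le hε1
    have hεp1' : (0:ℝ) ≤ ε ^ (n + 1) := by positivity
    have hεp3 : (0:ℝ) ≤ ε ^ (n + 3) / (n + 3) := by positivity
    have hMpos : (0:ℝ) < γM * J ^ 2 := by positivity
    have hNpos : (0:ℝ) ≤ (p : ℝ) ^ 2 * (ε ^ (n + 1) / (n + 1)) + γK * J ^ 2 := by positivity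
    calc ((p : ℝ) ^ 2 * (ε ^ (n + 1) / (n + 1)) + γK * J ^ 2) /
          (ε ^ (n + 3) / (n + 3) + γM * J ^ 2)
        ≤ ((p : ℝ) ^ 2 * (ε ^ (n + 1) / (n + 1)) + γK * J ^ 2) / (γM * J ^ 2) := by
          apply div_le_div_of_nonneg_left hNpos hMpos
          linarith
      _ = (p : ℝ) ^ 2 * ε ^ (n + 1) / (((n : ℝ) + 1) * γM * J ^ 2) + γK / γM := by
          rw [add_div]
          congr 1
          · field_simp
          · rw [mul_comm γK, mul_comm γM, mul_div_mul_left _ _ (by positivity : J ^ 2 ≠ 0)]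
      _ ≤ (p : ℝ) ^ 2 / (((n : ℝ) + 1) * γM * J ^ 2) + γK / γM := by
          gcongr
          nlinarith [hεp1, hεp1', sq_nonneg (p:ℝ)]
      _ = γK / γM + (p : ℝ) ^ 2 / (((n : ℝ) + 1) * γM * J ^ 2) := by ring
end

section
/- Let p ≥ 1 be a natural number, γ_K > 0, and J ≠ 0 real numbers. Define for ε ∈ (0,1] the quotient q(ε) = (∫₀^ε p²·x^(2p−2) dx + γ_K·J²) / (∫₀^ε x^p dx). Then ε^(p+1)·q(ε) → γ_K·J²·(p+1) as ε → 0⁺; in particular q(ε) → +∞ as ε → 0⁺. Hence adding a ghost-penalty term to the stiffness matrix while using a row-sum lumped mass matrix without ghost mass produces a generalized Rayleigh quotient that diverges like ε^(−(p+1)) as the cut size ε tends to zero. -/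
open MeasureTheory Filter Set Topology

/-- With ghost stiffness `γ_K > 0`, jump `J ≠ 0`, and lumped mass without
ghost mass, the quotient `q(ε) = (∫₀^ε p²·x^(2p−2) dx + γ_K·J²)/(∫₀^ε x^p dx)` satisfies
`ε^(p+1)·q(ε) → γ_K·J²·(p+1)` as `ε → 0⁺`; in particular `q(ε) → +∞`. -/
theorem ghost_stiffness_lumped_mass_diverges
    (p : ℕ) (hp : 1 ≤ p) (γK J : ℝ) (hγK : 0 < γK) (hJ : J ≠ 0) :
    Tendsto (fun ε =>
        ε ^ (p + 1) *
          (((∫ x in (0:ℝ)..ε, (p : ℝ) ^ 2 * x ^ (2 * p - 2)) + γK * J ^ 2) /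
            (∫ x in (0:ℝ)..ε, x ^ p)))
      (𝓝[>] (0:ℝ)) (𝓝 (γK * J ^ 2 * ((p : ℝ) + 1))) ∧
    Tendsto (fun ε =>
        ((∫ x in (0:ℝ)..ε, (p : ℝ) ^ 2 * x ^ (2 * p - 2)) + γK * J ^ 2) /
          (∫ x in (0:ℝ)..ε, x ^ p))
      (𝓝[>] (0:ℝ)) atTop := by
  have h2p : 2 * p - 2 + 1 = 2 * p - 1 := by omega
  have hnum : ∀ ε : ℝ, (∫ x in (0:ℝ)..ε, (p : ℝ) ^ 2 * x ^ (2 * p - 2))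
      = (p : ℝ) ^ 2 * (ε ^ (2 * p - 1) / ((2 * p - 2 : ℕ) + 1)) := by
    intro ε
    rw [intervalIntegral.integral_const_mul, integral_pow, h2p]
    have h0 : (0:ℝ) ^ (2 * p - 1) = 0 := by
      apply zero_pow; omega
    rw [h0, sub_zero]
  have hden : ∀ ε : ℝ, (∫ x in (0:ℝ)..ε, x ^ p) = ε ^ (p + 1) / ((p : ℝ) + 1) := by
    intro ε
    rw [integral_pow]
    have h0 : (0:ℝ) ^ (p + 1) = 0 := by apply zero_pow; omega
    rw [h0, sub_zero]
  have hp1 : (0:ℝ) < (p : ℝ) + 1 := by positivity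
  -- the eventually-equal simplified forms
  have hnumlim : Tendsto (fun ε : ℝ => (∫ x in (0:ℝ)..ε, (p : ℝ) ^ 2 * x ^ (2 * p - 2)) + γK * J ^ 2)
      (𝓝[>] (0:ℝ)) (𝓝 (γK * J ^ 2)) := by
    have : Tendsto (fun ε : ℝ => (p : ℝ) ^ 2 * (ε ^ (2 * p - 1) / ((2 * p - 2 : ℕ) + 1)) + γK * J ^ 2)
        (𝓝 (0:ℝ)) (𝓝 (γK * J ^ 2)) := by
      have h0 : (0:ℝ) ^ (2 * p - 1) = 0 := by apply zero_pow; omega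
      have hc : Continuous fun ε : ℝ => (p : ℝ) ^ 2 * (ε ^ (2 * p - 1) / ((2 * p - 2 : ℕ) + 1)) + γK * J ^ 2 := by
        continuity
      have := hc.tendsto 0
      simpa [h0] using this
    have := this.mono_left (nhdsWithin_le_nhds : 𝓝[>] (0:ℝ) ≤ 𝓝 0)
    refine this.congr fun ε => ?_
    rw [hnum]
  have hdenpos : ∀ ε ∈ Ioi (0:ℝ), (0:ℝ) < ∫ x in (0:ℝ)..ε, x ^ p := by
    intro ε hε
    rw [hden]
    have : (0:ℝ) < ε := hε
    positivity
  constructor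
  · have key : Tendsto (fun ε : ℝ => ((∫ x in (0:ℝ)..ε, (p : ℝ) ^ 2 * x ^ (2 * p - 2)) + γK * J ^ 2) * ((p:ℝ) + 1))
        (𝓝[>] (0:ℝ)) (𝓝 (γK * J ^ 2 * ((p : ℝ) + 1))) := hnumlim.mul_const _
    refine key.congr' ?_
    filter_upwards [self_mem_nhdsWithin] with ε hε
    have hε0 : (0:ℝ) < ε := hε
    rw [hden]
    have hεp : ε ^ (p + 1) ≠ 0 := by positivity
    field_simp
  · have hinv : Tendsto (fun ε : ℝ => (∫ x in (0:ℝ)..ε, x ^ p)⁻¹) (𝓝[>] (0:ℝ)) atTop := by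
      apply tendsto_inv_nhdsGT_zero.comp
      rw [tendsto_nhdsWithin_iff]
      constructor
      · have : Tendsto (fun ε : ℝ => ε ^ (p + 1) / ((p : ℝ) + 1)) (𝓝 0) (𝓝 0) := by
          have hc : Continuous fun ε : ℝ => ε ^ (p + 1) / ((p : ℝ) + 1) := by continuity
          simpa [zero_pow] using hc.tendsto 0
        refine (this.mono_left nhdsWithin_le_nhds).congr fun ε => ?_
        rw [hden]
      · filter_upwards [self_mem_nhdsWithin] with ε hε
        exact hdenpos ε hε
    have := hnumlim.pos_mul_atTop (by positivity) hinv
    refine this.congr fun ε => ?_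
    rw [div_eq_mul_inv]
end

section
/- Let f : ℝ → ℝ be continuously differentiable on [0,1] with f(0) ≠ 0, and let β̄ > 0. Define for ε ∈ (0,1] the quotient q(ε) = (∫₀¹ f′(x)² dx + (β̄/ε)·f(ε)²) / (∫₀¹ f(x)² dx). Then ε·q(ε) → β̄·f(0)² / (∫₀¹ f(x)² dx) > 0 as ε → 0⁺; in particular q(ε) → +∞ like ε^(−1). Hence Nitsche's method with the cut-size dependent penalty β = β̄/ε applied to a function that does not vanish at the immersed boundary yields a generalized Rayleigh quotient, and thus a largest eigenvalue, that diverges as the cut size ε tends to zero. -/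
open MeasureTheory Filter Set Topology

/-- For `f` continuously differentiable on `[0,1]` with `f 0 ≠ 0` and
`β̄ > 0`, the Nitsche quotient
`q(ε) = (∫₀¹ f′² dx + (β̄/ε)·f(ε)²)/(∫₀¹ f² dx)` satisfies
`ε·q(ε) → β̄·f(0)²/(∫₀¹ f² dx) > 0` as `ε → 0⁺`. -/
theorem nitsche_cut_size_penalty_diverges
    (f : ℝ → ℝ) (hf : ContDiffOn ℝ 1 f (Icc 0 1)) (hf0 : f 0 ≠ 0)
    (βbar : ℝ) (hβ : 0 < βbar) :
    Tendsto (fun ε =>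
        ε * (((∫ x in (0:ℝ)..1, (deriv f x) ^ 2) + (βbar / ε) * (f ε) ^ 2) /
          (∫ x in (0:ℝ)..1, (f x) ^ 2)))
      (𝓝[>] (0:ℝ))
      (𝓝 (βbar * (f 0) ^ 2 / (∫ x in (0:ℝ)..1, (f x) ^ 2))) ∧
    0 < βbar * (f 0) ^ 2 / (∫ x in (0:ℝ)..1, (f x) ^ 2) := by
  have hfc : ContinuousOn f (Icc 0 1) := hf.continuousOn
  have hgc : ContinuousOn (fun x => (f x) ^ 2) (Icc 0 1) := by
    exact (hfc.pow 2)
  -- positivity of the denominator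
  have hB : 0 < ∫ x in (0:ℝ)..1, (f x) ^ 2 := by
    have h0mem : (0:ℝ) ∈ Icc (0:ℝ) 1 := by norm_num
    have hcw : ContinuousWithinAt (fun x => (f x) ^ 2) (Icc 0 1) 0 := hgc 0 h0mem
    have hpos0 : 0 < (f 0) ^ 2 := by positivity
    have hev : ∀ᶠ x in 𝓝[Icc (0:ℝ) 1] 0, (f 0) ^ 2 / 2 < (f x) ^ 2 := by
      have := hcw.eventually (eventually_gt_nhds (show (f 0)^2/2 < (f 0)^2 by linarith))
      exact this
    rw [eventually_nhdsWithin_iff] at hev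
    rcases Metric.eventually_nhds_iff.mp hev with ⟨δ, hδ, hball⟩
    set d := min δ 1 with hd
    have hd0 : 0 < d := lt_min hδ one_pos
    have hd1 : d ≤ 1 := min_le_right _ _
    have hi1 : IntervalIntegrable (fun x => (f x) ^ 2) volume 0 d := by
      apply (hgc.mono ?_).intervalIntegrable
      rw [uIcc_of_le (le_of_lt hd0)]
      exact fun x hx => ⟨hx.1, le_trans hx.2 hd1⟩
    have hi2 : IntervalIntegrable (fun x => (f x) ^ 2) volume d 1 := by
      apply (hgc.mono ?_).intervalIntegrable
      rw [uIcc_of_le hd1]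
      exact fun x hx => ⟨le_trans (le_of_lt hd0) hx.1, hx.2⟩
    have hsplit : (∫ x in (0:ℝ)..1, (f x) ^ 2)
        = (∫ x in (0:ℝ)..d, (f x) ^ 2) + ∫ x in d..1, (f x) ^ 2 :=
      (intervalIntegral.integral_add_adjacent_intervals hi1 hi2).symm
    have h1 : 0 < ∫ x in (0:ℝ)..d, (f x) ^ 2 := by
      apply intervalIntegral.intervalIntegral_pos_of_pos_on hi1
      · intro x hx
        have hxd : dist x 0 < δ := by
          rw [Real.dist_eq, sub_zero, abs_of_pos hx.1]
          exact lt_of_lt_of_le hx.2 (min_le_left _ _)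
        have := hball hxd ⟨le_of_lt hx.1, le_trans (le_of_lt hx.2) hd1⟩
        linarith
      · exact hd0
    have h2 : 0 ≤ ∫ x in d..1, (f x) ^ 2 := by
      apply intervalIntegral.integral_nonneg hd1
      intro x _; positivity
    rw [hsplit]
    exact add_pos_of_pos_of_nonneg h1 h2
  have hBne : (∫ x in (0:ℝ)..1, (f x) ^ 2) ≠ 0 := ne_of_gt hB
  constructor
  · -- the limit
    have hle : 𝓝[>] (0:ℝ) ≤ 𝓝[Icc (0:ℝ) 1] 0 := by
      rw [← nhdsWithin_Ioc_eq_nhdsGT (show (0:ℝ) < 1 by norm_num)]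
      exact nhdsWithin_mono _ Ioc_subset_Icc_self
    have hftend : Tendsto f (𝓝[>] (0:ℝ)) (𝓝 (f 0)) :=
      ((hfc 0 (by norm_num)).mono_left hle)
    have hεtend : Tendsto (fun ε : ℝ => ε) (𝓝[>] (0:ℝ)) (𝓝 0) :=
      tendsto_id.mono_left nhdsWithin_le_nhds
    have hmain : Tendsto (fun ε =>
        (ε * (∫ x in (0:ℝ)..1, (deriv f x) ^ 2) + βbar * (f ε) ^ 2) /
          (∫ x in (0:ℝ)..1, (f x) ^ 2))
        (𝓝[>] (0:ℝ))
        (𝓝 (βbar * (f 0) ^ 2 / (∫ x in (0:ℝ)..1, (f x) ^ 2))) := by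
      have : Tendsto (fun ε =>
          ε * (∫ x in (0:ℝ)..1, (deriv f x) ^ 2) + βbar * (f ε) ^ 2)
          (𝓝[>] (0:ℝ)) (𝓝 (βbar * (f 0) ^ 2)) := by
        have h1 := hεtend.mul_const (∫ x in (0:ℝ)..1, (deriv f x) ^ 2)
        have h2 := (tendsto_const_nhds.mul ((hftend.pow 2)) :
          Tendsto (fun ε => βbar * (f ε) ^ 2) (𝓝[>] (0:ℝ)) (𝓝 (βbar * (f 0) ^ 2)))
        simpa using h1.add h2
      exact this.div_const _
    refine hmain.congr' ?_
    filter_upwards [self_mem_nhdsWithin] with ε (hε : 0 < ε)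
    field_simp
  · positivity
end

section
/- Let V be a real vector space, let E and F be real inner product spaces, and let T : V → E, S : V → F, and R : V → F be linear maps. Suppose C ≥ 0 is such that ‖S v‖² ≤ C·‖T v‖² for all v ∈ V, and let β ≥ 2·C. Then for every v ∈ V: ‖T v‖² − 2·⟨S v, R v⟩ + β·‖R v‖² ≥ (1/2)·‖T v‖². In particular the symmetric Nitsche bilinear form a(u,v) = ⟨Tu,Tv⟩ − ⟨Su,Rv⟩ − ⟨Sv,Ru⟩ + β·⟨Ru,Rv⟩ is positive semi-definite on V. -/
/-- Abstract coercivity of the symmetric Nitsche form for the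
second-order problem: if `‖S v‖² ≤ C·‖T v‖²` for all `v` and `β ≥ 2·C`, then
`‖T v‖² − 2·⟨S v, R v⟩ + β·‖R v‖² ≥ (1/2)·‖T v‖²` for all `v`. -/
theorem nitsche_coercivity_second_order
    {V E F : Type*} [AddCommGroup V] [Module ℝ V]
    [NormedAddCommGroup E] [InnerProductSpace ℝ E]
    [NormedAddCommGroup F] [InnerProductSpace ℝ F]
    (T : V →ₗ[ℝ] E) (S R : V →ₗ[ℝ] F)
    (C : ℝ) (hC : 0 ≤ C) (hSC : ∀ v : V, ‖S v‖ ^ 2 ≤ C * ‖T v‖ ^ 2)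
    (β : ℝ) (hβ : 2 * C ≤ β) :
    ∀ v : V,
      (1 / 2) * ‖T v‖ ^ 2 ≤
        ‖T v‖ ^ 2 - 2 * (inner ℝ (S v) (R v) : ℝ) + β * ‖R v‖ ^ 2 := by
  intro v
  have hinner : (inner ℝ (S v) (R v) : ℝ) ≤ ‖S v‖ * ‖R v‖ := real_inner_le_norm _ _
  have hb : 0 ≤ β := le_trans (by linarith) hβ
  rcases eq_or_lt_of_le hC with hC0 | hCpos
  · have hS : ‖S v‖ ^ 2 ≤ 0 := by simpa [← hC0] using hSC v
    have hS0 : ‖S v‖ = 0 := by nlinarith [norm_nonneg (S v)]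
    have : (inner ℝ (S v) (R v) : ℝ) ≤ 0 := by
      have := real_inner_le_norm (S v) (R v)
      simpa [hS0] using this
    nlinarith [norm_nonneg (R v), sq_nonneg ‖R v‖]
  · -- 2ab ≤ a²/(2C) + 2C b²  from (a/√(2C) - √(2C) b)² ≥ 0
    have hS := hSC v
    have key : 2 * (‖S v‖ * ‖R v‖) ≤ ‖S v‖ ^ 2 / (2 * C) + 2 * C * ‖R v‖ ^ 2 := by
      have h := sq_nonneg (‖S v‖ / Real.sqrt (2 * C) - Real.sqrt (2 * C) * ‖R v‖)
      have h2C : (0:ℝ) < 2 * C := by linarith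
      have hs : Real.sqrt (2 * C) ^ 2 = 2 * C := Real.sq_sqrt h2C.le
      have hsp : (0:ℝ) < Real.sqrt (2 * C) := Real.sqrt_pos.mpr h2C
      set s := Real.sqrt (2 * C) with hsdef
      have hexp : (‖S v‖ / s - s * ‖R v‖) ^ 2
          = ‖S v‖ ^ 2 / (2 * C) - 2 * (‖S v‖ * ‖R v‖) + 2 * C * ‖R v‖ ^ 2 := by
        rw [← hs]
        field_simp
        ring
      nlinarith [h, hexp]
    have h1 : ‖S v‖ ^ 2 / (2 * C) ≤ ‖T v‖ ^ 2 / 2 := by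
      rw [div_le_div_iff₀ (by linarith) (by norm_num)]
      nlinarith
    nlinarith [sq_nonneg ‖R v‖]
end

section
/- Let V be a real vector space, let E and F₁, F₂ be real inner product spaces, and let T : V → E, S₁ : V → F₁, R₁ : V → F₁, S₂ : V → F₂, R₂ : V → F₂ be linear maps. Suppose C₁, C₂ ≥ 0 are such that ‖S₁ v‖² ≤ C₁·‖T v‖² and ‖S₂ v‖² ≤ C₂·‖T v‖² for all v ∈ V, and let β₁ ≥ 3·C₁ and β₂ ≥ 3·C₂. Then for every v ∈ V: ‖T v‖² − 2·⟨S₁ v, R₁ v⟩ − 2·⟨S₂ v, R₂ v⟩ + β₁·‖R₁ v‖² + β₂·‖R₂ v‖² ≥ (1/3)·‖T v‖². In particular the corresponding symmetric Nitsche bilinear form for the fourth-order problem, with its two essential boundary conditions, is positive semi-definite on V. -/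
lemma nitsche_aux {F : Type*} [NormedAddCommGroup F] [InnerProductSpace ℝ F]
    (s r : F) (C t β : ℝ) (hC : 0 ≤ C) (ht : 0 ≤ t)
    (hs : ‖s‖ ^ 2 ≤ C * t) (hβ : 3 * C ≤ β) :
    2 * (inner ℝ s r : ℝ) ≤ (1 / 3) * t + β * ‖r‖ ^ 2 := by
  have h1 : (inner ℝ s r : ℝ) ≤ ‖s‖ * ‖r‖ := real_inner_le_norm s r
  have hr : (0 : ℝ) ≤ ‖r‖ := norm_nonneg r
  have hsn : (0 : ℝ) ≤ ‖s‖ := norm_nonneg s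
  rcases eq_or_lt_of_le hC with hC0 | hC0
  · have : ‖s‖ = 0 := by nlinarith [sq_nonneg ‖s‖]
    nlinarith
  · have key : C * (2 * (inner ℝ s r : ℝ)) ≤ C * ((1 / 3) * t + β * ‖r‖ ^ 2) := by
      nlinarith [sq_nonneg (‖s‖ - 3 * C * ‖r‖),
        mul_le_mul_of_nonneg_left h1 hC0.le,
        mul_nonneg (mul_nonneg hC0.le (sub_nonneg.2 hβ)) (sq_nonneg ‖r‖)]
    exact le_of_mul_le_mul_left key hC0

/-- Abstract coercivity of the symmetric Nitsche form for the
fourth-order problem with two essential boundary conditions: if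
`‖S₁ v‖² ≤ C₁·‖T v‖²`, `‖S₂ v‖² ≤ C₂·‖T v‖²`, `β₁ ≥ 3·C₁` and `β₂ ≥ 3·C₂`, then
`‖T v‖² − 2·⟨S₁ v, R₁ v⟩ − 2·⟨S₂ v, R₂ v⟩ + β₁·‖R₁ v‖² + β₂·‖R₂ v‖² ≥ (1/3)·‖T v‖²`. -/
theorem nitsche_coercivity_fourth_order
    {V E F₁ F₂ : Type*} [AddCommGroup V] [Module ℝ V]
    [NormedAddCommGroup E] [InnerProductSpace ℝ E]
    [NormedAddCommGroup F₁] [InnerProductSpace ℝ F₁]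
    [NormedAddCommGroup F₂] [InnerProductSpace ℝ F₂]
    (T : V →ₗ[ℝ] E) (S₁ R₁ : V →ₗ[ℝ] F₁) (S₂ R₂ : V →ₗ[ℝ] F₂)
    (C₁ C₂ : ℝ) (hC₁ : 0 ≤ C₁) (hC₂ : 0 ≤ C₂)
    (hSC₁ : ∀ v : V, ‖S₁ v‖ ^ 2 ≤ C₁ * ‖T v‖ ^ 2)
    (hSC₂ : ∀ v : V, ‖S₂ v‖ ^ 2 ≤ C₂ * ‖T v‖ ^ 2)
    (β₁ β₂ : ℝ) (hβ₁ : 3 * C₁ ≤ β₁) (hβ₂ : 3 * C₂ ≤ β₂) :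
    ∀ v : V,
      (1 / 3) * ‖T v‖ ^ 2 ≤
        ‖T v‖ ^ 2 - 2 * (inner ℝ (S₁ v) (R₁ v) : ℝ) - 2 * (inner ℝ (S₂ v) (R₂ v) : ℝ)
          + β₁ * ‖R₁ v‖ ^ 2 + β₂ * ‖R₂ v‖ ^ 2 := by
  intro v
  have ht : (0 : ℝ) ≤ ‖T v‖ ^ 2 := sq_nonneg _
  have h1 := nitsche_aux (S₁ v) (R₁ v) C₁ (‖T v‖ ^ 2) β₁ hC₁ ht (hSC₁ v) hβ₁
  have h2 := nitsche_aux (S₂ v) (R₂ v) C₂ (‖T v‖ ^ 2) β₂ hC₂ ht (hSC₂ v) hβ₂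
  linarith
end

section
/- Let λ > 0 and Δt > 0 be real numbers with λ·Δt² < 4. Then every sequence u : ℕ → ℝ satisfying the central difference recurrence u_{n+2} − 2·u_{n+1} + u_n = −λ·Δt²·u_{n+1} for all n ∈ ℕ is bounded, i.e. there exists a constant C (depending on λ·Δt², u₀ and u₁) such that |u_n| ≤ C for all n. -/
private lemma cds_coercive (b x y : ℝ) :
    (2 - |b|) / 2 * (x ^ 2 + y ^ 2) ≤ x ^ 2 + y ^ 2 - b * x * y := by
  have h1 : b * x * y ≤ |b| * |x| * |y| := by
    calc b * x * y ≤ |b * x * y| := le_abs_self _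
      _ = |b| * |x| * |y| := by rw [abs_mul, abs_mul]
  have h2 : |x| * |y| ≤ (x ^ 2 + y ^ 2) / 2 := by
    nlinarith [sq_nonneg (|x| - |y|), sq_abs x, sq_abs y]
  have h3 := mul_le_mul_of_nonneg_left h2 (abs_nonneg b)
  nlinarith

/-- Stability of the central difference scheme below the critical
time step: if `λ·Δt² < 4` (`λ, Δt > 0`), every sequence satisfying
`u_{n+2} − 2·u_{n+1} + u_n = −λ·Δt²·u_{n+1}` is bounded. -/
theorem central_difference_stable_below_critical
    (lam Δt : ℝ) (hlam : 0 < lam) (hΔt : 0 < Δt) (h : lam * Δt ^ 2 < 4)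
    (u : ℕ → ℝ)
    (hrec : ∀ n : ℕ, u (n + 2) - 2 * u (n + 1) + u n = -(lam * Δt ^ 2) * u (n + 1)) :
    ∃ C : ℝ, ∀ n : ℕ, |u n| ≤ C := by
  set a : ℝ := lam * Δt ^ 2 with ha
  have ha0 : 0 < a := by positivity
  set b : ℝ := 2 - a with hb
  have hb2 : |b| < 2 := by rw [abs_lt]; constructor <;> (simp only [hb]; linarith)
  set E : ℕ → ℝ := fun n => u (n+1)^2 + u n ^ 2 - b * u (n+1) * u n with hE
  have hstep : ∀ n, u (n+2) = b * u (n+1) - u n := by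
    intro n
    have h1 := hrec n
    simp only [hb]
    linarith
  have hconst : ∀ n, E n = E 0 := by
    intro n
    induction n with
    | zero => rfl
    | succ k ih =>
      have h2 := hstep k
      have : E (k+1) = E k := by
        simp only [hE]
        rw [show k + 1 + 1 = k + 2 from rfl, h2]
        ring
      rw [this, ih]
  set c : ℝ := (2 - |b|) / 2 with hc
  have hc0 : 0 < c := by simp only [hc]; linarith
  have hcoer : ∀ n, c * (u (n+1) ^ 2 + u n ^ 2) ≤ E n := fun n =>
    cds_coercive b (u (n+1)) (u n)
  refine ⟨Real.sqrt (E 0 / c), fun n => ?_⟩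
  have hsq : u n ^ 2 ≤ E 0 / c := by
    have h1 := hcoer n
    rw [hconst n] at h1
    rw [le_div_iff₀ hc0]
    nlinarith [mul_nonneg hc0.le (sq_nonneg (u (n+1)))]
  calc |u n| = Real.sqrt (u n ^ 2) := (Real.sqrt_sq_eq_abs _).symm
    _ ≤ Real.sqrt (E 0 / c) := Real.sqrt_le_sqrt hsq
end
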